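/- arXiv:2306.15048 — 4 statements merged into one kernel-verified Lean document; each statement's English description precedes it below -/
import Mathlib

section
/- Let Q0, Q1 be left-continuous quantile functions of cdfs F0, F1, let 0 ≤ a < b ≤ 1, U ~ Uniform(0,1), Y0 = Q0(U), and Y1 a random variable with cdf F1 under any coupling. For every nondecreasing concave h : ℝ → ℝ (with integrability), E[h(Q1(b - U) - Q0(U)) · 1{a < U < b}] ≤ E[h(Y1 - Y0) · 1{a < U < b}]. -/
open MeasureTheory Set Filter Function
open scoped ENNReal NNReal

noncomputable section

/-- `F` is a cumulative distribution function. -/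
def IsCDF (F : ℝ → ℝ) : Prop :=
  Monotone F ∧ (∀ y, ContinuousWithinAt F (Set.Ici y) y) ∧
    Tendsto F atBot (nhds 0) ∧ Tendsto F atTop (nhds 1)

/-! ### Slope inequalities for concave functions -/

lemma concave_slope_le {h : ℝ → ℝ} (hc : ConcaveOn ℝ Set.univ h) {x1 y1 x2 y2 : ℝ}
    (h1 : x1 < y1) (h2 : x2 < y2) (hx : x1 ≤ x2) (hy : y1 ≤ y2) :
    (h y2 - h x2) / (y2 - x2) ≤ (h y1 - h x1) / (y1 - x1) := by
  have hcv : ConvexOn ℝ Set.univ (-h) := hc.neg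
  have key : (h x1 - h y1) / (y1 - x1) ≤ (h x2 - h y2) / (y2 - x2) := by
    have e1 : (h x1 - h y1) / (y1 - x1) ≤ (h x1 - h y2) / (y2 - x1) := by
      rcases eq_or_lt_of_le hy with rfl | hy'
      · exact le_rfl
      · have h3 := hcv.secant_mono_aux2 (Set.mem_univ x1) (Set.mem_univ y2) h1 hy'
        have h4 : (-h y1 + h x1) / (y1 - x1) ≤ (-h y2 + h x1) / (y2 - x1) := by
          simpa [Pi.neg_apply, neg_sub_neg] using h3
        convert h4 using 2 <;> ring
    have e2 : (h x1 - h y2) / (y2 - x1) ≤ (h x2 - h y2) / (y2 - x2) := by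
      rcases eq_or_lt_of_le hx with rfl | hx'
      · exact le_rfl
      · have h3 := hcv.secant_mono_aux3 (Set.mem_univ x1) (Set.mem_univ y2) hx' h2
        have h4 : (-h y2 + h x1) / (y2 - x1) ≤ (-h y2 + h x2) / (y2 - x2) := by
          simpa [Pi.neg_apply, neg_sub_neg] using h3
        convert h4 using 2 <;> ring
    exact e1.trans e2
  have := neg_le_neg key
  rwa [← neg_div, ← neg_div, neg_sub, neg_sub] at this

/-! ### Quantile function: Galois connection -/

lemma isCDF_nonneg {F : ℝ → ℝ} (hF : IsCDF F) (y : ℝ) : 0 ≤ F y := by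
  refine le_of_tendsto hF.2.2.1 ?_
  filter_upwards [eventually_le_atBot y] with x hx
  exact hF.1 hx

lemma quantile_le_iff {F : ℝ → ℝ} (hF : IsCDF F) {u : ℝ} (h0 : 0 < u) (h1 : u < 1) (y : ℝ) :
    sInf {x : ℝ | u ≤ F x} ≤ y ↔ u ≤ F y := by
  set S : Set ℝ := {x : ℝ | u ≤ F x} with hS
  have hne : S.Nonempty := by
    have : ∀ᶠ x in atTop, u ≤ F x := hF.2.2.2.eventually (eventually_ge_nhds h1)
    exact this.exists
  have hbdd : BddBelow S := by
    have : ∀ᶠ x in atBot, F x < u := hF.2.2.1.eventually (eventually_lt_nhds h0)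
    obtain ⟨x0, hx0⟩ := this.exists
    refine ⟨x0, fun x hx => ?_⟩
    have hx' : u ≤ F x := hx
    by_contra hcon
    push_neg at hcon
    exact absurd hx' (not_le.2 (lt_of_le_of_lt (hF.1 hcon.le) hx0))
  have hmem : u ≤ F (sInf S) := by
    set c := sInf S with hc
    have hev : ∀ᶠ x in nhdsWithin c (Set.Ioi c), u ≤ F x := by
      refine eventually_nhdsWithin_of_forall (fun x hx => ?_)
      obtain ⟨v, hvS, hvx⟩ := exists_lt_of_csInf_lt hne hx
      exact le_trans hvS (hF.1 hvx.le)
    have htd : Tendsto F (nhdsWithin c (Set.Ioi c)) (nhds (F c)) :=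
      (hF.2.1 c).mono_left (nhdsWithin_mono c (Set.Ioi_subset_Ici_self))
    exact ge_of_tendsto htd hev
  constructor
  · intro hle
    exact le_trans hmem (hF.1 hle)
  · intro hy
    exact csInf_le hbdd hy

/-! ### Measurability of monotone functions on an interval -/

lemma measurable_indicator_monotoneOn {f : ℝ → ℝ} {α β : ℝ}
    (hf : MonotoneOn f (Set.Ioo α β)) : Measurable ((Set.Ioo α β).indicator f) := by
  apply measurable_of_Iio
  intro c
  have hSmeas : MeasurableSet {u | u ∈ Set.Ioo α β ∧ f u < c} := by
    by_cases hS : {u | u ∈ Set.Ioo α β ∧ f u < c}.Nonempty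
    · set S := {u | u ∈ Set.Ioo α β ∧ f u < c} with hSdef
      have hbdd : BddAbove S := BddAbove.mono (fun u hu => hu.1) bddAbove_Ioo
      set d := sSup S with hd
      have hSeq : S = (Set.Ioo α β ∩ Set.Iio d) ∪ (S ∩ {d}) := by
        ext u
        constructor
        · intro hu
          rcases eq_or_lt_of_le (le_csSup hbdd hu) with heq | hlt
          · exact Or.inr ⟨hu, heq⟩
          · exact Or.inl ⟨hu.1, hlt⟩
        · rintro (⟨huIoo, hud⟩ | ⟨huS, _⟩)
          · obtain ⟨v, hvS, huv⟩ := exists_lt_of_lt_csSup hS hud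
            exact ⟨huIoo, lt_of_le_of_lt (hf huIoo hvS.1 huv.le) hvS.2⟩
          · exact huS
      rw [hSeq]
      exact (measurableSet_Ioo.inter measurableSet_Iio).union
        (((Set.countable_singleton d).mono Set.inter_subset_right).measurableSet)
    · rw [Set.not_nonempty_iff_eq_empty.mp hS]
      exact MeasurableSet.empty
  have hpre : (Set.Ioo α β).indicator f ⁻¹' (Set.Iio c) =
      {u | u ∈ Set.Ioo α β ∧ f u < c} ∪ (if (0:ℝ) < c then (Set.Ioo α β)ᶜ else ∅) := by
    ext u
    simp only [Set.mem_preimage, Set.mem_Iio, Set.mem_union, Set.mem_setOf_eq,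
      Set.mem_compl_iff]
    by_cases hu : u ∈ Set.Ioo α β
    · rw [Set.indicator_of_mem hu]
      constructor
      · intro hfu; exact Or.inl ⟨hu, hfu⟩
      · rintro (⟨_, hfu⟩ | hcon)
        · exact hfu
        · exfalso
          by_cases h0 : (0:ℝ) < c
          · rw [if_pos h0] at hcon; exact hcon hu
          · rw [if_neg h0] at hcon; exact hcon
    · rw [Set.indicator_of_notMem hu]
      constructor
      · intro h0c
        right; rw [if_pos h0c]; exact hu
      · rintro (⟨hcon, _⟩ | hcon)
        · exact absurd hcon hu
        · by_cases h0 : (0:ℝ) < c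
          · exact h0
          · rw [if_neg h0] at hcon; exact absurd hcon (Set.notMem_empty u)
  rw [hpre]
  refine hSmeas.union ?_
  split
  · exact measurableSet_Ioo.compl
  · exact MeasurableSet.empty

/-! ### Layer-cake / Fubini swap -/

lemma lintegral_Ico_swap {Ω : Type*} [MeasurableSpace Ω] (ν : Measure Ω) [SFinite ν]
    {V W : Ω → ℝ} (hV : Measurable V) (hW : Measurable W) :
    ∫⁻ ω, volume (Set.Ico (V ω) (W ω)) ∂ν
      = ∫⁻ r, ν {ω | V ω ≤ r ∧ r < W ω} ∂volume := by
  set P : Set (Ω × ℝ) := {q | V q.1 ≤ q.2 ∧ q.2 < W q.1} with hP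
  have hset : MeasurableSet P := by
    have h1 : MeasurableSet {q : Ω × ℝ | V q.1 ≤ q.2} :=
      measurableSet_le (hV.comp measurable_fst) measurable_snd
    have h2 : MeasurableSet {q : Ω × ℝ | q.2 < W q.1} :=
      measurableSet_lt measurable_snd (hW.comp measurable_fst)
    exact h1.inter h2
  have key : ∀ ω, volume (Set.Ico (V ω) (W ω))
      = ∫⁻ r, P.indicator 1 (ω, r) ∂volume := by
    intro ω
    have heq : (fun r => P.indicator 1 (ω, r)) = (Set.Ico (V ω) (W ω)).indicator (1 : ℝ → ℝ≥0∞) := by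
      funext r
      by_cases hr : V ω ≤ r ∧ r < W ω
      · have hm1 : (ω, r) ∈ P := hr
        have hm2 : r ∈ Set.Ico (V ω) (W ω) := hr
        rw [Set.indicator_of_mem hm1, Set.indicator_of_mem hm2]; rfl
      · have hm1 : (ω, r) ∉ P := hr
        have hm2 : r ∉ Set.Ico (V ω) (W ω) := hr
        rw [Set.indicator_of_notMem hm1, Set.indicator_of_notMem hm2]
    rw [← lintegral_indicator_one measurableSet_Ico, ← heq]
  have hunc : AEMeasurable (uncurry fun ω r => P.indicator (1 : Ω × ℝ → ℝ≥0∞) (ω, r))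
      (ν.prod volume) := by
    have heq2 : (uncurry fun (ω : Ω) (r : ℝ) => P.indicator (1 : Ω × ℝ → ℝ≥0∞) (ω, r))
        = P.indicator 1 := by
      funext q; rcases q with ⟨ω, r⟩; rfl
    rw [heq2]
    exact ((measurable_one.indicator hset)).aemeasurable
  calc ∫⁻ ω, volume (Set.Ico (V ω) (W ω)) ∂ν
      = ∫⁻ ω, ∫⁻ r, P.indicator (1 : Ω × ℝ → ℝ≥0∞) (ω, r) ∂volume ∂ν := lintegral_congr key
    _ = ∫⁻ r, ∫⁻ ω, P.indicator (1 : Ω × ℝ → ℝ≥0∞) (ω, r) ∂ν ∂volume :=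
        MeasureTheory.lintegral_lintegral_swap hunc
    _ = ∫⁻ r, ν {ω | V ω ≤ r ∧ r < W ω} ∂volume := by
        refine lintegral_congr fun r => ?_
        have heq : (fun ω => P.indicator (1 : Ω × ℝ → ℝ≥0∞) (ω, r))
            = ({ω | V ω ≤ r ∧ r < W ω}).indicator (1 : Ω → ℝ≥0∞) := by
          funext ω
          by_cases hω : V ω ≤ r ∧ r < W ω
          · have hm1 : (ω, r) ∈ P := hω
            have hm2 : ω ∈ {ω | V ω ≤ r ∧ r < W ω} := hω
            rw [Set.indicator_of_mem hm1, Set.indicator_of_mem hm2]; rfl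
          · have hm1 : (ω, r) ∉ P := hω
            have hm2 : ω ∉ {ω | V ω ≤ r ∧ r < W ω} := hω
            rw [Set.indicator_of_notMem hm1, Set.indicator_of_notMem hm2]
        rw [heq, lintegral_indicator_one]
        exact (measurableSet_le hV measurable_const).inter (measurableSet_lt measurable_const hW)

/-! ### Elementary helper identities -/

lemma ofReal_max_zero (x : ℝ) : ENNReal.ofReal (max x 0) = ENNReal.ofReal x := by
  rcases le_total x 0 with hx | hx
  · rw [max_eq_right hx, ENNReal.ofReal_zero, ENNReal.ofReal_of_nonpos hx]
  · rw [max_eq_left hx]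

lemma min_ofReal (x y : ℝ) :
    min (ENNReal.ofReal x) (ENNReal.ofReal y) = ENNReal.ofReal (min x y) := by
  rcases le_total x y with hxy | hxy
  · rw [min_eq_left (ENNReal.ofReal_le_ofReal hxy), min_eq_left hxy]
  · rw [min_eq_right (ENNReal.ofReal_le_ofReal hxy), min_eq_right hxy]

lemma sub_max_eq_min (c x y : ℝ) : c - max x y = min (c - x) (c - y) := by
  rcases le_total x y with hxy | hxy
  · rw [max_eq_right hxy, min_eq_right (by linarith)]
  · rw [max_eq_left hxy, min_eq_left (by linarith)]

lemma min_sub_eq_neg_max (x c : ℝ) : min x c - c = -(max (c - x) 0) := by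
  rcases le_total x c with hxc | hxc
  · rw [min_eq_left hxc, max_eq_left (by linarith)]; ring
  · rw [min_eq_right hxc, max_eq_right (by linarith)]; ring

/-! ### Piecewise linear interpolation of a concave function on a dyadic-style grid -/

def gridPt (n j : ℕ) : ℝ := -(n+1 : ℝ) + j * (1/(n+1))

def gridK (n : ℕ) : ℕ := 2*(n+1)*(n+1)

def gridSlope (h : ℝ → ℝ) (n j : ℕ) : ℝ :=
  if j < gridK n then (h (gridPt n (j+1)) - h (gridPt n j)) * (n+1) else 0

def gridH (h : ℝ → ℝ) (n : ℕ) (z : ℝ) : ℝ :=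
  h (gridPt n (gridK n)) + ∑ j ∈ Finset.range (gridK n),
    (gridSlope h n j - gridSlope h n (j+1)) * (min z (gridPt n (j+1)) - gridPt n (j+1))

lemma gridPt_succ_sub (n j : ℕ) : gridPt n (j+1) - gridPt n j = 1/(n+1) := by
  simp only [gridPt]
  push_cast
  ring

lemma one_div_n_pos (n : ℕ) : (0:ℝ) < 1/(n+1) := by positivity

lemma gridPt_strict (n j : ℕ) : gridPt n j < gridPt n (j+1) := by
  have := gridPt_succ_sub n j
  have := one_div_n_pos n
  linarith

lemma gridPt_mono (n : ℕ) : Monotone (gridPt n) :=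
  monotone_nat_of_le_succ (fun j => (gridPt_strict n j).le)

lemma gridPt_zero (n : ℕ) : gridPt n 0 = -(n+1 : ℝ) := by simp [gridPt]

lemma gridPt_last (n : ℕ) : gridPt n (gridK n) = (n+1 : ℝ) := by
  have hn : ((n:ℝ)+1) ≠ 0 := by positivity
  simp only [gridPt, gridK]
  push_cast
  field_simp
  ring

lemma gridK_pos (n : ℕ) : 0 < gridK n :=
  Nat.mul_pos (Nat.mul_pos (by norm_num) (Nat.succ_pos n)) (Nat.succ_pos n)

lemma gridSlope_K (h : ℝ → ℝ) (n : ℕ) : gridSlope h n (gridK n) = 0 :=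
  if_neg (lt_irrefl _)

lemma gridSlope_nonneg {h : ℝ → ℝ} (hm : Monotone h) (n j : ℕ) : 0 ≤ gridSlope h n j := by
  unfold gridSlope
  split
  · exact mul_nonneg (sub_nonneg.2 (hm (gridPt_mono n (Nat.le_succ j)))) (by positivity)
  · exact le_rfl

lemma gridSlope_mul {h : ℝ → ℝ} (n : ℕ) {j : ℕ} (hj : j < gridK n) :
    gridSlope h n j * (gridPt n (j+1) - gridPt n j) = h (gridPt n (j+1)) - h (gridPt n j) := by
  rw [gridSlope, if_pos hj, gridPt_succ_sub]
  have hn : ((n:ℝ)+1) ≠ 0 := by positivity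
  field_simp

lemma gridSlope_succ_le {h : ℝ → ℝ} (hm : Monotone h) (hc : ConcaveOn ℝ Set.univ h)
    (n j : ℕ) : gridSlope h n (j+1) ≤ gridSlope h n j := by
  by_cases hj1 : j + 1 < gridK n
  · have hj : j < gridK n := Nat.lt_of_succ_lt hj1
    rw [gridSlope, gridSlope, if_pos hj1, if_pos hj]
    have hs := concave_slope_le hc (x1 := gridPt n j) (y1 := gridPt n (j+1))
      (x2 := gridPt n (j+1)) (y2 := gridPt n (j+2))
      (gridPt_strict n j) (gridPt_strict n (j+1))
      (gridPt_strict n j).le (gridPt_strict n (j+1)).le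
    rw [gridPt_succ_sub, gridPt_succ_sub] at hs
    have hs' := (div_le_div_iff_of_pos_right (one_div_n_pos n)).mp hs
    exact mul_le_mul_of_nonneg_right hs' (by positivity)
  · rw [gridSlope, if_neg hj1]
    exact gridSlope_nonneg hm n j

lemma gridSlope_sub_nonneg {h : ℝ → ℝ} (hm : Monotone h) (hc : ConcaveOn ℝ Set.univ h)
    (n j : ℕ) : 0 ≤ gridSlope h n j - gridSlope h n (j+1) :=
  sub_nonneg.2 (gridSlope_succ_le hm hc n j)

lemma sum_telescope_Ico (φ : ℕ → ℝ) {k K : ℕ} (hk : k ≤ K) :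
    ∑ j ∈ Finset.Ico k K, (φ j - φ (j+1)) = φ k - φ K := by
  rw [Finset.sum_Ico_eq_sum_range]
  have : ∑ i ∈ Finset.range (K - k), (φ (k + i) - φ (k + i + 1))
      = ∑ i ∈ Finset.range (K - k), ((fun i => φ (k + i)) i - (fun i => φ (k + i)) (i+1)) := rfl
  rw [this, Finset.sum_range_sub' (fun i => φ (k + i)) (K - k), Nat.add_sub_cancel' hk]
  simp

lemma sum_telescope_Ico' (φ : ℕ → ℝ) {k K : ℕ} (hk : k ≤ K) :
    ∑ j ∈ Finset.Ico k K, (φ (j+1) - φ j) = φ K - φ k := by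
  have h1 : ∑ j ∈ Finset.Ico k K, (φ (j+1) - φ j)
      = - ∑ j ∈ Finset.Ico k K, (φ j - φ (j+1)) := by
    rw [← Finset.sum_neg_distrib]
    exact Finset.sum_congr rfl (fun j _ => by ring)
  rw [h1, sum_telescope_Ico φ hk]
  ring

lemma sum_gridSlope {h : ℝ → ℝ} (n : ℕ) {k : ℕ} (hk : k ≤ gridK n) :
    ∑ j ∈ Finset.Ico k (gridK n), (gridSlope h n j - gridSlope h n (j+1)) = gridSlope h n k := by
  rw [sum_telescope_Ico (gridSlope h n) hk, gridSlope_K, sub_zero]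

lemma gridH_val {h : ℝ → ℝ} (n : ℕ) {k : ℕ} (hk : k ≤ gridK n) :
    gridH h n (gridPt n k) = h (gridPt n k) := by
  unfold gridH
  have step1 : ∑ j ∈ Finset.range (gridK n),
      (gridSlope h n j - gridSlope h n (j+1)) * (min (gridPt n k) (gridPt n (j+1)) - gridPt n (j+1))
      = ∑ j ∈ Finset.Ico k (gridK n),
        (gridSlope h n j - gridSlope h n (j+1)) * (gridPt n k - gridPt n (j+1)) := by
    rw [Finset.range_eq_Ico, ← Finset.sum_Ico_consecutive _ (Nat.zero_le k) hk]
    have hfirst : ∑ j ∈ Finset.Ico 0 k,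
        (gridSlope h n j - gridSlope h n (j+1)) * (min (gridPt n k) (gridPt n (j+1)) - gridPt n (j+1)) = 0 := by
      refine Finset.sum_eq_zero (fun j hj => ?_)
      have hjk : j + 1 ≤ k := (Finset.mem_Ico.mp hj).2
      rw [min_eq_right (gridPt_mono n hjk)]
      ring
    have hsecond : ∀ j ∈ Finset.Ico k (gridK n),
        (gridSlope h n j - gridSlope h n (j+1)) * (min (gridPt n k) (gridPt n (j+1)) - gridPt n (j+1))
        = (gridSlope h n j - gridSlope h n (j+1)) * (gridPt n k - gridPt n (j+1)) := by
      intro j hj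
      have hkj : k ≤ j + 1 := le_trans (Finset.mem_Ico.mp hj).1 (Nat.le_succ j)
      rw [min_eq_left (gridPt_mono n hkj)]
    rw [hfirst, zero_add, Finset.sum_congr rfl hsecond]
  rw [step1]
  have step2 : ∑ j ∈ Finset.Ico k (gridK n),
      (gridSlope h n j - gridSlope h n (j+1)) * (gridPt n k - gridPt n (j+1))
      = h (gridPt n k) - h (gridPt n (gridK n)) := by
    have hterm : ∀ j ∈ Finset.Ico k (gridK n),
        (gridSlope h n j - gridSlope h n (j+1)) * (gridPt n k - gridPt n (j+1))
        = ((gridSlope h n j * (gridPt n k - gridPt n j))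
            - (gridSlope h n (j+1) * (gridPt n k - gridPt n (j+1))))
          - (h (gridPt n (j+1)) - h (gridPt n j)) := by
      intro j hj
      have hj' : j < gridK n := (Finset.mem_Ico.mp hj).2
      have hmul := gridSlope_mul (h := h) n hj'
      linear_combination -hmul
    rw [Finset.sum_congr rfl hterm, Finset.sum_sub_distrib,
      sum_telescope_Ico (fun j => gridSlope h n j * (gridPt n k - gridPt n j)) hk,
      sum_telescope_Ico' (fun j => h (gridPt n j)) hk]
    rw [gridSlope_K]
    ring
  rw [step2]
  ring

lemma gridH_sub {h : ℝ → ℝ} (n : ℕ) (z w : ℝ) :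
    gridH h n z - gridH h n w = ∑ j ∈ Finset.range (gridK n),
      (gridSlope h n j - gridSlope h n (j+1)) * (min z (gridPt n (j+1)) - min w (gridPt n (j+1))) := by
  unfold gridH
  rw [add_sub_add_left_eq_sub, ← Finset.sum_sub_distrib]
  exact Finset.sum_congr rfl (fun j _ => by ring)

lemma gridH_cell {h : ℝ → ℝ} (n : ℕ) {k : ℕ} (hk : k < gridK n) {z : ℝ}
    (hz1 : gridPt n k ≤ z) (hz2 : z ≤ gridPt n (k+1)) :
    gridH h n z = h (gridPt n k) + gridSlope h n k * (z - gridPt n k) := by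
  have hdiff := gridH_sub (h := h) n z (gridPt n k)
  have step : ∑ j ∈ Finset.range (gridK n),
      (gridSlope h n j - gridSlope h n (j+1)) * (min z (gridPt n (j+1)) - min (gridPt n k) (gridPt n (j+1)))
      = gridSlope h n k * (z - gridPt n k) := by
    rw [Finset.range_eq_Ico, ← Finset.sum_Ico_consecutive _ (Nat.zero_le k) hk.le]
    have hfirst : ∑ j ∈ Finset.Ico 0 k,
        (gridSlope h n j - gridSlope h n (j+1)) * (min z (gridPt n (j+1)) - min (gridPt n k) (gridPt n (j+1))) = 0 := by
      refine Finset.sum_eq_zero (fun j hj => ?_)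
      have hjk : j + 1 ≤ k := (Finset.mem_Ico.mp hj).2
      have h1 : gridPt n (j+1) ≤ z := le_trans (gridPt_mono n hjk) hz1
      have h2 : gridPt n (j+1) ≤ gridPt n k := gridPt_mono n hjk
      rw [min_eq_right h1, min_eq_right h2]
      ring
    have hsecond : ∀ j ∈ Finset.Ico k (gridK n),
        (gridSlope h n j - gridSlope h n (j+1)) * (min z (gridPt n (j+1)) - min (gridPt n k) (gridPt n (j+1)))
        = (gridSlope h n j - gridSlope h n (j+1)) * (z - gridPt n k) := by
      intro j hj
      have hkj : k + 1 ≤ j + 1 := Nat.succ_le_succ (Finset.mem_Ico.mp hj).1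
      have h1 : z ≤ gridPt n (j+1) := le_trans hz2 (gridPt_mono n hkj)
      have h2 : gridPt n k ≤ gridPt n (j+1) :=
        gridPt_mono n (le_trans (Nat.le_succ k) hkj)
      rw [min_eq_left h1, min_eq_left h2]
    rw [hfirst, zero_add, Finset.sum_congr rfl hsecond, ← Finset.sum_mul,
      sum_gridSlope n hk.le]
  rw [step] at hdiff
  rw [gridH_val n hk.le] at hdiff
  linarith

lemma gridH_bot {h : ℝ → ℝ} (n : ℕ) {z : ℝ} (hz : z ≤ gridPt n 0) :
    gridH h n z = h (gridPt n 0) + gridSlope h n 0 * (z - gridPt n 0) := by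
  have hdiff := gridH_sub (h := h) n z (gridPt n 0)
  have step : ∑ j ∈ Finset.range (gridK n),
      (gridSlope h n j - gridSlope h n (j+1)) * (min z (gridPt n (j+1)) - min (gridPt n 0) (gridPt n (j+1)))
      = gridSlope h n 0 * (z - gridPt n 0) := by
    have hsecond : ∀ j ∈ Finset.range (gridK n),
        (gridSlope h n j - gridSlope h n (j+1)) * (min z (gridPt n (j+1)) - min (gridPt n 0) (gridPt n (j+1)))
        = (gridSlope h n j - gridSlope h n (j+1)) * (z - gridPt n 0) := by
      intro j _
      have h0j : gridPt n 0 ≤ gridPt n (j+1) := gridPt_mono n (Nat.zero_le _)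
      have h1 : z ≤ gridPt n (j+1) := le_trans hz h0j
      rw [min_eq_left h1, min_eq_left h0j]
    rw [Finset.sum_congr rfl hsecond, ← Finset.sum_mul, Finset.range_eq_Ico,
      sum_gridSlope n (Nat.zero_le _)]
  rw [step] at hdiff
  rw [gridH_val n (Nat.zero_le _)] at hdiff
  linarith

lemma gridH_top {h : ℝ → ℝ} (n : ℕ) {z : ℝ} (hz : gridPt n (gridK n) ≤ z) :
    gridH h n z = h (gridPt n (gridK n)) := by
  unfold gridH
  have : ∑ j ∈ Finset.range (gridK n),
      (gridSlope h n j - gridSlope h n (j+1)) * (min z (gridPt n (j+1)) - gridPt n (j+1)) = 0 := by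
    refine Finset.sum_eq_zero (fun j hj => ?_)
    have hjK : j + 1 ≤ gridK n := (Finset.mem_range.mp hj)
    have h1 : gridPt n (j+1) ≤ z := le_trans (gridPt_mono n hjK) hz
    rw [min_eq_right h1]
    ring
  rw [this, add_zero]

lemma gridH_le_self {h : ℝ → ℝ} (hm : Monotone h) (hc : ConcaveOn ℝ Set.univ h)
    (n : ℕ) {k : ℕ} (hk : k < gridK n) {z : ℝ}
    (hz1 : gridPt n k ≤ z) (hz2 : z ≤ gridPt n (k+1)) : gridH h n z ≤ h z := by
  rw [gridH_cell n hk hz1 hz2]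
  rcases eq_or_lt_of_le hz1 with rfl | hlt
  · simp
  · have hs := concave_slope_le hc (x1 := gridPt n k) (y1 := z)
      (x2 := gridPt n k) (y2 := gridPt n (k+1)) hlt (gridPt_strict n k) le_rfl hz2
    rw [gridPt_succ_sub] at hs
    have hgk : gridSlope h n k = (h (gridPt n (k+1)) - h (gridPt n k)) * (n+1) := by
      rw [gridSlope, if_pos hk]
    have hconv : (h (gridPt n (k+1)) - h (gridPt n k)) / (1/(n+1)) = gridSlope h n k := by
      rw [hgk]
      have hn : ((n:ℝ)+1) ≠ 0 := by positivity
      field_simp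
    rw [hconv] at hs
    have := (le_div_iff₀ (by linarith : (0:ℝ) < z - gridPt n k)).mp hs
    linarith

lemma gridH_ge_left {h : ℝ → ℝ} (hm : Monotone h) (n : ℕ) {k : ℕ} (hk : k < gridK n) {z : ℝ}
    (hz1 : gridPt n k ≤ z) (hz2 : z ≤ gridPt n (k+1)) : h (gridPt n k) ≤ gridH h n z := by
  rw [gridH_cell n hk hz1 hz2]
  have h1 : 0 ≤ gridSlope h n k := gridSlope_nonneg hm n k
  nlinarith

lemma gridH_bot_bounds {h : ℝ → ℝ} (hm : Monotone h) (hc : ConcaveOn ℝ Set.univ h)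
    (n : ℕ) {z : ℝ} (hz : z ≤ gridPt n 0) :
    h z ≤ gridH h n z ∧ gridH h n z ≤ h (gridPt n 0) := by
  rw [gridH_bot n hz]
  constructor
  · rcases eq_or_lt_of_le hz with rfl | hlt
    · simp
    · have hs := concave_slope_le hc (x1 := z) (y1 := gridPt n 0)
        (x2 := gridPt n 0) (y2 := gridPt n 1) hlt (gridPt_strict n 0) hz (gridPt_strict n 0).le
      rw [show gridPt n (0+1) = gridPt n 1 from rfl, gridPt_succ_sub] at hs
      have hgk : (h (gridPt n 1) - h (gridPt n 0)) / (1/(n+1)) = gridSlope h n 0 := by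
        rw [gridSlope, if_pos (gridK_pos n)]
        have hn : ((n:ℝ)+1) ≠ 0 := by positivity
        field_simp
      rw [hgk] at hs
      have h2 := (le_div_iff₀ (by linarith : (0:ℝ) < gridPt n 0 - z)).mp hs
      nlinarith
  · have h1 : 0 ≤ gridSlope h n 0 := gridSlope_nonneg hm n 0
    nlinarith

lemma grid_locate (n : ℕ) {z : ℝ} (h0 : gridPt n 0 ≤ z) (h1 : z ≤ gridPt n (gridK n)) :
    ∃ k, k < gridK n ∧ gridPt n k ≤ z ∧ z ≤ gridPt n (k+1) := by
  set j0 := Nat.floor ((z - gridPt n 0) * (n+1)) with hj0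
  refine ⟨min j0 (gridK n - 1), lt_of_le_of_lt (min_le_right _ _)
    (Nat.sub_lt (gridK_pos n) one_pos), ?_, ?_⟩
  · have hk_le : ((min j0 (gridK n - 1) : ℕ) : ℝ) ≤ (z - gridPt n 0) * (n+1) := by
      calc ((min j0 (gridK n - 1) : ℕ) : ℝ) ≤ (j0 : ℝ) := Nat.cast_le.2 (min_le_left _ _)
        _ ≤ (z - gridPt n 0) * (n+1) :=
          Nat.floor_le (mul_nonneg (by linarith) (by positivity))
    have hn : (0:ℝ) < (n:ℝ)+1 := by positivity
    have : ((min j0 (gridK n - 1) : ℕ) : ℝ) * (1/(n+1)) ≤ z - gridPt n 0 := by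
      rw [← div_le_iff₀ hn] at hk_le
      calc ((min j0 (gridK n - 1) : ℕ) : ℝ) * (1/(n+1))
          = ((min j0 (gridK n - 1) : ℕ) : ℝ) / ((n:ℝ)+1) := by ring
        _ ≤ z - gridPt n 0 := hk_le
    simp only [gridPt] at this ⊢
    linarith [this]
  · by_cases hj : j0 ≤ gridK n - 1
    · rw [min_eq_left hj]
      have hflt : (z - gridPt n 0) * (n+1) < (j0 : ℝ) + 1 := Nat.lt_floor_add_one _
      have hn : (0:ℝ) < (n:ℝ)+1 := by positivity
      have : z - gridPt n 0 < ((j0 : ℝ) + 1) * (1/(n+1)) := by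
        rw [← lt_div_iff₀ hn] at hflt
        calc z - gridPt n 0 < ((j0:ℝ)+1) / ((n:ℝ)+1) := hflt
          _ = ((j0 : ℝ) + 1) * (1/(n+1)) := by ring
      have heq : gridPt n (j0+1) = gridPt n 0 + ((j0:ℝ)+1) * (1/(n+1)) := by
        simp only [gridPt]
        push_cast
        ring
      rw [heq]
      linarith
    · rw [min_eq_right (le_of_not_ge hj)]
      rw [Nat.sub_add_cancel (gridK_pos n)]
      exact h1

lemma gridH_abs {h : ℝ → ℝ} (hm : Monotone h) (hc : ConcaveOn ℝ Set.univ h)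
    {γ : ℝ} (hγ : 0 ≤ γ) (hLip : ∀ z, h z - h (z-1) ≤ γ) (n : ℕ) (z : ℝ) :
    |gridH h n z| ≤ 2*|h z| + (γ + |h 0| + |h 1|) := by
  have habs : ∀ x : ℝ, -|x| ≤ x ∧ x ≤ |x| := fun x => ⟨neg_abs_le x, le_abs_self x⟩
  have hnn : ∀ x : ℝ, (0:ℝ) ≤ |x| := fun x => abs_nonneg x
  have hnnz := hnn (h z); have hnn0 := hnn (h 0); have hnn1 := hnn (h 1)
  rcases le_or_gt z (gridPt n 0) with hz0 | hz0
  · obtain ⟨hl, hu⟩ := gridH_bot_bounds hm hc n hz0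
    have ht0 : gridPt n 0 ≤ 0 := by
      rw [gridPt_zero]
      have : (0:ℝ) ≤ (n:ℝ)+1 := by positivity
      linarith
    have : h (gridPt n 0) ≤ h 0 := hm ht0
    rw [abs_le]
    constructor
    · have := (habs (h z)).1; linarith
    · have := (habs (h 0)).2; linarith
  rcases le_or_gt (gridPt n (gridK n)) z with hzK | hzK
  · rw [gridH_top n hzK]
    have ht1 : (1:ℝ) ≤ gridPt n (gridK n) := by rw [gridPt_last]; push_cast; linarith
    have hl : h 1 ≤ h (gridPt n (gridK n)) := hm ht1
    have hu : h (gridPt n (gridK n)) ≤ h z := hm hzK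
    rw [abs_le]
    constructor
    · have := (habs (h 1)).1; linarith
    · have := (habs (h z)).2; linarith
  · obtain ⟨k, hk, hkz, hzk⟩ := grid_locate n hz0.le hzK.le
    have hu : gridH h n z ≤ h z := gridH_le_self hm hc n hk hkz hzk
    have hl : h (gridPt n k) ≤ gridH h n z := gridH_ge_left hm n hk hkz hzk
    have hδ : (1:ℝ)/(n+1) ≤ 1 := by
      rw [div_le_one (by positivity)]
      push_cast; linarith
    have htk : z - 1 ≤ gridPt n k := by
      have := gridPt_succ_sub n k
      linarith
    have h2 : h (z-1) ≤ h (gridPt n k) := hm htk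
    have h3 : h z - γ ≤ h (z-1) := by linarith [hLip z]
    rw [abs_le]
    constructor
    · have := (habs (h z)).1; linarith
    · have := (habs (h z)).2; linarith

lemma gridH_tendsto {h : ℝ → ℝ} (hm : Monotone h) (hc : ConcaveOn ℝ Set.univ h)
    (hcont : Continuous h) (z : ℝ) :
    Tendsto (fun n => gridH h n z) atTop (nhds (h z)) := by
  have hlow : Tendsto (fun n : ℕ => h (z - 1/(n+1))) atTop (nhds (h z)) := by
    have h1 : Tendsto (fun n : ℕ => z - 1/((n:ℝ)+1)) atTop (nhds z) := by
      have := tendsto_one_div_add_atTop_nhds_zero_nat (𝕜 := ℝ)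
      have h2 := tendsto_const_nhds (x := z) (f := atTop (α := ℕ)) |>.sub this
      simpa using h2
    exact (hcont.tendsto z).comp h1
  refine tendsto_of_tendsto_of_tendsto_of_le_of_le' hlow tendsto_const_nhds ?_ ?_
  · filter_upwards [eventually_ge_atTop (Nat.ceil |z|)] with n hn
    have hzn : |z| ≤ (n:ℝ) := by
      calc |z| ≤ (Nat.ceil |z| : ℝ) := Nat.le_ceil _
        _ ≤ (n : ℝ) := Nat.cast_le.2 hn
    have h0 : gridPt n 0 ≤ z := by
      rw [gridPt_zero]
      have := (abs_le.mp (le_refl |z|) : _)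
      have := neg_abs_le z
      push_cast
      linarith
    have h1 : z ≤ gridPt n (gridK n) := by
      rw [gridPt_last]
      have := le_abs_self z
      push_cast
      linarith
    obtain ⟨k, hk, hkz, hzk⟩ := grid_locate n h0 h1
    have hl : h (gridPt n k) ≤ gridH h n z := gridH_ge_left hm n hk hkz hzk
    have htk : z - 1/(n+1) ≤ gridPt n k := by
      have := gridPt_succ_sub n k
      linarith
    exact le_trans (hm htk) hl
  · filter_upwards [eventually_ge_atTop (Nat.ceil |z|)] with n hn
    have hzn : |z| ≤ (n:ℝ) := by
      calc |z| ≤ (Nat.ceil |z| : ℝ) := Nat.le_ceil _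
        _ ≤ (n : ℝ) := Nat.cast_le.2 hn
    have h0 : gridPt n 0 ≤ z := by
      rw [gridPt_zero]
      have := neg_abs_le z
      push_cast
      linarith
    have h1 : z ≤ gridPt n (gridK n) := by
      rw [gridPt_last]
      have := le_abs_self z
      push_cast
      linarith
    obtain ⟨k, hk, hkz, hzk⟩ := grid_locate n h0 h1
    exact gridH_le_self hm hc n hk hkz hzk

lemma gridH_continuous (h : ℝ → ℝ) (n : ℕ) : Continuous (gridH h n) := by
  unfold gridH
  exact continuous_const.add (continuous_finset_sum _ (fun j _ =>
    continuous_const.mul ((continuous_id.min continuous_const).sub continuous_const)))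

/-! ### Tangent-line truncation below a point -/

def tangentSlope (h : ℝ → ℝ) (p : ℝ) : ℝ :=
  sSup ((fun y => (h y - h p) / (y - p)) '' Set.Ioi p)

def lowerAffine (h : ℝ → ℝ) (p : ℝ) (z : ℝ) : ℝ :=
  if z ≤ p then h p + tangentSlope h p * (z - p) else h z

section TangentSlope

variable {h : ℝ → ℝ} (hm : Monotone h) (hc : ConcaveOn ℝ Set.univ h) (p : ℝ)

include hc in
lemma ts_bddAbove : BddAbove ((fun y => (h y - h p) / (y - p)) '' Set.Ioi p) := by
  refine ⟨(h p - h (p-1)) / (p - (p-1)), ?_⟩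
  rintro x ⟨y, hy, rfl⟩
  exact concave_slope_le hc (by linarith : p - 1 < p) hy (by linarith) (le_of_lt hy)

lemma ts_nonempty : ((fun y => (h y - h p) / (y - p)) '' Set.Ioi p).Nonempty :=
  ⟨_, ⟨p+1, by simp, rfl⟩⟩

include hc in
lemma ts_ge_slope {y : ℝ} (hy : p < y) : (h y - h p) / (y - p) ≤ tangentSlope h p :=
  le_csSup (ts_bddAbove hc p) ⟨y, hy, rfl⟩

include hc in
lemma ts_le {B : ℝ} (hB : ∀ y, p < y → (h y - h p) / (y - p) ≤ B) : tangentSlope h p ≤ B := by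
  refine csSup_le (ts_nonempty p) ?_
  rintro x ⟨y, hy, rfl⟩
  exact hB y hy

include hm hc in
lemma ts_nonneg : 0 ≤ tangentSlope h p := by
  refine le_trans ?_ (ts_ge_slope hc p (by linarith : p < p + 1))
  have h1 : h p ≤ h (p+1) := hm (by linarith)
  have h2 : (0:ℝ) < p + 1 - p := by linarith
  exact div_nonneg (by linarith) h2.le

include hc in
lemma ts_tangent : ∀ z, h z ≤ h p + tangentSlope h p * (z - p) := by
  intro z
  rcases lt_trichotomy z p with hz | hz | hz
  · have hle : tangentSlope h p ≤ (h p - h z) / (p - z) := by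
      refine ts_le hc p (fun y hy => ?_)
      exact concave_slope_le hc hz hy (le_of_lt hz) hy.le
    have hpz : (0:ℝ) < p - z := by linarith
    have := (div_le_div_iff_of_pos_right hpz).mpr (le_refl (h p - h z))
    have h2 : tangentSlope h p * (p - z) ≤ h p - h z :=
      (le_div_iff₀ hpz).mp hle
    nlinarith
  · subst hz; simp
  · have hle : (h z - h p) / (z - p) ≤ tangentSlope h p := ts_ge_slope hc p hz
    have hpz : (0:ℝ) < z - p := by linarith
    have h2 : h z - h p ≤ tangentSlope h p * (z - p) :=
      (div_le_iff₀ hpz).mp hle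
    linarith

include hc in
lemma ts_anti {q : ℝ} (hpq : p ≤ q) : tangentSlope h q ≤ tangentSlope h p := by
  refine ts_le hc q (fun y hy => ?_)
  have h1 : (h y - h p) / (y - p) ≤ tangentSlope h p := ts_ge_slope hc p (lt_of_le_of_lt hpq hy)
  refine le_trans ?_ h1
  exact concave_slope_le hc (lt_of_le_of_lt hpq hy) hy hpq le_rfl

end TangentSlope

section LowerAffine

variable {h : ℝ → ℝ} (hm : Monotone h) (hc : ConcaveOn ℝ Set.univ h) (p : ℝ)

include hc in
lemma la_ge : ∀ z, h z ≤ lowerAffine h p z := by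
  intro z
  unfold lowerAffine
  split
  · exact ts_tangent hc p z
  · exact le_rfl

lemma la_eq {z : ℝ} (hz : p ≤ z) : lowerAffine h p z = h z := by
  unfold lowerAffine
  split
  · have : z = p := le_antisymm (by assumption) hz
    subst this; ring
  · rfl

include hm hc in
lemma la_mono : Monotone (lowerAffine h p) := by
  intro z z' hzz'
  unfold lowerAffine
  by_cases hz' : z' ≤ p
  · rw [if_pos (le_trans hzz' hz'), if_pos hz']
    have := ts_nonneg hm hc p
    nlinarith
  · rw [if_neg hz']
    push_neg at hz'
    by_cases hz : z ≤ p
    · rw [if_pos hz]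
      have h1 : h p + tangentSlope h p * (z - p) ≤ h p := by
        have := ts_nonneg hm hc p
        nlinarith
      exact le_trans h1 (hm hz'.le)
    · rw [if_neg hz]
      exact hm hzz'

include hm hc in
lemma la_abs : ∀ z, |lowerAffine h p z| ≤ |h z| + |h p| := by
  intro z
  by_cases hz : z ≤ p
  · have h1 : h z ≤ lowerAffine h p z := la_ge hc p z
    have h2 : lowerAffine h p z ≤ h p := by
      unfold lowerAffine
      rw [if_pos hz]
      have := ts_nonneg hm hc p
      nlinarith
    rw [abs_le]
    constructor
    · have := neg_abs_le (h z); have := abs_nonneg (h p); linarith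
    · have := le_abs_self (h p); have := abs_nonneg (h z); linarith
  · push_neg at hz
    rw [la_eq p hz.le]
    have := abs_nonneg (h p)
    linarith [le_refl |h z|]

include hm hc in
lemma la_lip : ∀ z, lowerAffine h p z - lowerAffine h p (z-1) ≤ tangentSlope h p := by
  intro z
  by_cases hz : z ≤ p
  · rw [show lowerAffine h p z = h p + tangentSlope h p * (z - p) from if_pos hz,
      show lowerAffine h p (z-1) = h p + tangentSlope h p * (z-1 - p) from if_pos (by linarith)]
    ring_nf
    nlinarith [le_refl (tangentSlope h p)]
  · push_neg at hz
    rw [la_eq p hz.le]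
    by_cases hz1 : z - 1 ≤ p
    · rw [show lowerAffine h p (z-1) = h p + tangentSlope h p * (z-1 - p) from if_pos hz1]
      have htan := ts_tangent hc p z
      have := ts_nonneg hm hc p
      nlinarith
    · push_neg at hz1
      rw [la_eq p hz1.le]
      have hslope : (h z - h (z-1)) / (z - (z-1)) ≤ (h z - h p) / (z - p) :=
        concave_slope_le hc hz (by linarith) hz1.le le_rfl
      have h2 : (h z - h p) / (z - p) ≤ tangentSlope h p := ts_ge_slope hc p hz
      have h3 : (h z - h (z-1)) / (z - (z-1)) = h z - h (z-1) := by
        norm_num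
      linarith [hslope, h2, h3]

include hc in
lemma la_le_la {q : ℝ} (hpq : p ≤ q) : ∀ z, lowerAffine h p z ≤ lowerAffine h q z := by
  intro z
  by_cases hz : z ≤ p
  · rw [show lowerAffine h p z = h p + tangentSlope h p * (z - p) from if_pos hz,
      show lowerAffine h q z = h q + tangentSlope h q * (z - q) from if_pos (le_trans hz hpq)]
    have h1 : h p ≤ h q + tangentSlope h q * (p - q) := ts_tangent hc q p
    have h2 : tangentSlope h q ≤ tangentSlope h p := ts_anti hc p hpq
    nlinarith
  · push_neg at hz
    rw [la_eq p hz.le]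
    exact la_ge hc q z

include hm hc in
lemma la_conc : ConcaveOn ℝ Set.univ (lowerAffine h p) := by
  have aux : ∀ x y α β : ℝ, x ≤ y → 0 ≤ α → 0 ≤ β → α + β = 1 →
      α * lowerAffine h p x + β * lowerAffine h p y ≤ lowerAffine h p (α * x + β * y) := by
    intro x y α β hxy hα hβ hab
    have hβ' : β = 1 - α := by linarith
    have hw1 : x ≤ α * x + β * y := by
      have he : α * x + β * y - x = β * (y - x) := by linear_combination x * hab
      have := mul_nonneg hβ (sub_nonneg.2 hxy)
      linarith
    have hw2 : α * x + β * y ≤ y := by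
      have he : y - (α * x + β * y) = α * (y - x) := by linear_combination (-y) * hab
      have := mul_nonneg hα (sub_nonneg.2 hxy)
      linarith
    set T : ℝ → ℝ := fun z => h p + tangentSlope h p * (z - p) with hT
    have hTh : ∀ z, h z ≤ T z := ts_tangent hc p
    by_cases hyp : y ≤ p
    · -- all points ≤ p : affine, equality
      have hx : x ≤ p := le_trans hxy hyp
      have hwp : α * x + β * y ≤ p := le_trans hw2 hyp
      rw [show lowerAffine h p x = T x from if_pos hx,
        show lowerAffine h p y = T y from if_pos hyp,
        show lowerAffine h p (α * x + β * y) = T (α * x + β * y) from if_pos hwp]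
      simp only [hT]
      have heq : α * (h p + tangentSlope h p * (x - p)) + β * (h p + tangentSlope h p * (y - p))
          = h p + tangentSlope h p * (α * x + β * y - p) := by
        linear_combination (h p - tangentSlope h p * p) * hab
      linarith [heq.le]
    · push_neg at hyp
      by_cases hxp : p ≤ x
      · -- all points ≥ p
        have hwp : p ≤ α * x + β * y := le_trans hxp hw1
        rw [la_eq p hxp, la_eq p hyp.le, la_eq p hwp]
        have := hc.2 (Set.mem_univ x) (Set.mem_univ y) hα hβ hab
        simpa [smul_eq_mul] using this
      · push_neg at hxp
        -- x < p < y
        by_cases hwp : α * x + β * y ≤ p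
        · -- w ≤ p
          rw [show lowerAffine h p x = T x from if_pos hxp.le,
            la_eq p hyp.le,
            show lowerAffine h p (α * x + β * y) = T (α * x + β * y) from if_pos hwp]
          have hTy : h y ≤ T y := hTh y
          have hTaff : T (α * x + β * y) = α * T x + β * T y := by
            simp only [hT]
            linear_combination (tangentSlope h p * p - h p) * hab
          rw [hTaff]
          nlinarith [mul_nonneg hβ (sub_nonneg.2 hTy)]
        · push_neg at hwp
          rw [show lowerAffine h p x = T x from if_pos hxp.le, la_eq p hyp.le,
            la_eq p hwp.le]
          set w := α * x + β * y with hwdef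
          have hyp' : (0:ℝ) < y - p := by linarith
          set θ := α * (y - x) / (y - p) with hθ
          clear_value θ
          have hθeq : θ * (y - p) = α * (y - x) := by
            rw [hθ]
            field_simp
          have hθ0 : 0 ≤ θ := by
            rw [hθ]
            exact div_nonneg (mul_nonneg hα (by linarith)) (by linarith)
          have hθ1 : θ ≤ 1 := by
            rw [hθ, div_le_one hyp']
            have he : y - w = α * (y - x) := by rw [hwdef, hβ']; ring
            linarith
          have hθα : α ≤ θ := by
            rw [hθ, le_div_iff₀ hyp']
            nlinarith [mul_nonneg hα (sub_nonneg.2 hxp.le)]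
          have hwcomb : θ * p + (1 - θ) * y = w := by
            rw [hwdef, hβ']
            linear_combination -hθeq
          have hconcw : θ * h p + (1 - θ) * h y ≤ h w := by
            have hb2 : (0:ℝ) ≤ 1 - θ := by linarith
            have hsum : θ + (1 - θ) = 1 := by ring
            have := hc.2 (Set.mem_univ p) (Set.mem_univ y) hθ0 hb2 hsum
            simp only [smul_eq_mul] at this
            rw [hwcomb] at this
            exact this
          have hkey : θ * h p = α * T x + (θ - α) * T y := by
            simp only [hT]
            linear_combination (-(tangentSlope h p)) * hθeq
          have hTy : h y ≤ T y := hTh y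
          calc α * T x + β * h y
              = θ * h p - (θ - α) * T y + β * h y := by rw [hkey]; ring
            _ ≤ θ * h p - (θ - α) * h y + β * h y := by
                nlinarith [mul_nonneg (sub_nonneg.2 hθα) (sub_nonneg.2 hTy)]
            _ = θ * h p + (1 - θ) * h y := by rw [hβ']; ring
            _ ≤ h w := hconcw
  constructor
  · exact convex_univ
  · intro x _ y _ α β hα hβ hab
    simp only [smul_eq_mul]
    rcases le_total x y with hxy | hxy
    · exact aux x y α β hxy hα hβ hab
    · have := aux y x β α hxy hβ hα (by linarith)
      calc α * lowerAffine h p x + β * lowerAffine h p y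
          = β * lowerAffine h p y + α * lowerAffine h p x := by ring
        _ ≤ lowerAffine h p (β * y + α * x) := this
        _ = lowerAffine h p (α * x + β * y) := by rw [add_comm]

lemma la_cont (hcont : Continuous h) : Continuous (lowerAffine h p) := by
  unfold lowerAffine
  refine Continuous.if_le ?_ hcont continuous_id continuous_const ?_
  · exact continuous_const.add (continuous_const.mul (continuous_id.sub continuous_const))
  · intro z hz
    subst hz
    ring

end LowerAffine

/-! ### Integrability of the negative part -/

lemma negpart_int {Ω : Type*} [MeasurableSpace Ω] (μ : Measure Ω) [IsFiniteMeasure μ]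
    (A : Set Ω) (W : Ω → ℝ) (hWae : AEMeasurable W (μ.restrict A))
    {h : ℝ → ℝ} (hc : ConcaveOn ℝ Set.univ h)
    {z1 z2 : ℝ} (hz1 : z1 ≤ 0) (h12 : z1 < z2) (hval : h z1 < h z2)
    (hint : IntegrableOn (fun ω => h (W ω)) A μ) :
    IntegrableOn (fun ω => max (-W ω) 0) A μ := by
  set c := (h z2 - h z1) / (z2 - z1) with hcdef
  have hcpos : 0 < c := div_pos (by linarith) (by linarith)
  have hbound : ∀ w : ℝ, max (-w) 0 ≤ -z1 + |z2| + (|h z1| + |h w|) / c := by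
    intro w
    have hfrac : 0 ≤ (|h z1| + |h w|) / c :=
      div_nonneg (by positivity) hcpos.le
    rcases le_or_gt z1 w with hw | hw
    · have h1 : -w ≤ -z1 := by linarith
      have h2 : (0:ℝ) ≤ -z1 := by linarith
      rw [max_le_iff]
      constructor
      · have : (0:ℝ) ≤ |z2| := abs_nonneg z2
        linarith
      · have : (0:ℝ) ≤ |z2| := abs_nonneg z2
        linarith
    · have hslope : c ≤ (h z1 - h w) / (z1 - w) :=
        concave_slope_le hc hw h12 hw.le (by linarith)
      have hzw : (0:ℝ) < z1 - w := by linarith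
      have h2 : c * (z1 - w) ≤ h z1 - h w := (le_div_iff₀ hzw).mp hslope
      have h3 : z1 - w ≤ (h z1 - h w) / c := (le_div_iff₀ hcpos).mpr (by linarith [h2, mul_comm c (z1 - w)])
      have h4 : h z1 - h w ≤ |h z1| + |h w| := by
        have := le_abs_self (h z1); have := neg_abs_le (h w); linarith
      have h5 : z1 - w ≤ (|h z1| + |h w|) / c := by
        refine le_trans h3 ?_
        gcongr
      rw [max_le_iff]
      have : (0:ℝ) ≤ |z2| := abs_nonneg z2
      constructor
      · linarith
      · linarith
  refine Integrable.mono'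
    (g := fun ω => -z1 + |z2| + (|h z1| + |h (W ω)|) / c) ?_ ?_ ?_
  · refine (integrable_const (-z1 + |z2|)).add ?_
    refine Integrable.div_const ?_ c
    refine (integrable_const |h z1|).add ?_
    simpa [Real.norm_eq_abs] using hint.norm
  · exact ((hWae.neg.max aemeasurable_const).aestronglyMeasurable)
  · refine ae_of_all _ (fun ω => ?_)
    have hb := hbound (W ω)
    rw [Real.norm_eq_abs, abs_of_nonneg (le_max_right _ _)]
    exact hb

/-! ### The comparison theorem from the level inequalities -/

lemma main_ineq_nice {Ω : Type*} [MeasurableSpace Ω] (μ : Measure Ω) [IsFiniteMeasure μ]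
    (A : Set Ω) (X Z : Ω → ℝ)
    (hXae : AEMeasurable X (μ.restrict A)) (hZae : AEMeasurable Z (μ.restrict A))
    (hXneg : IntegrableOn (fun ω => max (-X ω) 0) A μ)
    (hZneg : IntegrableOn (fun ω => max (-Z ω) 0) A μ)
    (hlevel : ∀ s : ℝ, (∫ ω in A, max (s - Z ω) 0 ∂μ) ≤ ∫ ω in A, max (s - X ω) 0 ∂μ)
    {h : ℝ → ℝ} (hm : Monotone h) (hc : ConcaveOn ℝ Set.univ h)
    {γ : ℝ} (hγ : 0 ≤ γ) (hLip : ∀ z, h z - h (z-1) ≤ γ)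
    (hX : IntegrableOn (fun ω => h (X ω)) A μ) (hZ : IntegrableOn (fun ω => h (Z ω)) A μ) :
    (∫ ω in A, h (X ω) ∂μ) ≤ ∫ ω in A, h (Z ω) ∂μ := by
  have hcont : Continuous h := continuousOn_univ.mp (hc.continuousOn isOpen_univ)
  have hminint : ∀ (W : Ω → ℝ), AEMeasurable W (μ.restrict A) →
      IntegrableOn (fun ω => max (-W ω) 0) A μ → ∀ c : ℝ,
      Integrable (fun ω => min (W ω) c - c) (μ.restrict A) := by
    intro W hWae hWneg c
    refine Integrable.mono' (g := fun ω => |c| + max (-W ω) 0)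
      ((integrable_const _).add hWneg)
      (((hWae.min aemeasurable_const).sub aemeasurable_const).aestronglyMeasurable) ?_
    refine ae_of_all _ (fun ω => ?_)
    have hle : min (W ω) c - c ≤ 0 := by
      have := min_le_right (W ω) c; linarith
    rw [Real.norm_eq_abs, abs_of_nonpos hle]
    have h0 := abs_nonneg c
    have h1 := le_abs_self c
    have h2 := le_max_right (-(W ω)) (0:ℝ)
    have h3 := le_max_left (-(W ω)) (0:ℝ)
    rcases le_total (W ω) c with hwc | hwc
    · rw [min_eq_left hwc]; linarith
    · rw [min_eq_right hwc]; linarith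
  have repr : ∀ (W : Ω → ℝ), AEMeasurable W (μ.restrict A) →
      IntegrableOn (fun ω => max (-W ω) 0) A μ → ∀ n : ℕ,
      (∫ ω in A, gridH h n (W ω) ∂μ)
        = h (gridPt n (gridK n)) * (μ A).toReal
          + ∑ j ∈ Finset.range (gridK n), (gridSlope h n j - gridSlope h n (j+1))
              * ∫ ω in A, (min (W ω) (gridPt n (j+1)) - gridPt n (j+1)) ∂μ := by
    intro W hWae hWneg n
    have hint_j : ∀ j ∈ Finset.range (gridK n),
        Integrable (fun ω => (gridSlope h n j - gridSlope h n (j+1))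
          * (min (W ω) (gridPt n (j+1)) - gridPt n (j+1))) (μ.restrict A) :=
      fun j _ => (hminint W hWae hWneg _).const_mul _
    have hpt : (fun ω => gridH h n (W ω)) = fun ω =>
        h (gridPt n (gridK n)) + ∑ j ∈ Finset.range (gridK n),
          (gridSlope h n j - gridSlope h n (j+1))
            * (min (W ω) (gridPt n (j+1)) - gridPt n (j+1)) := rfl
    rw [hpt, integral_add (integrable_const _) (integrable_finset_sum _ hint_j),
      integral_finset_sum _ hint_j]
    congr 1
    · rw [setIntegral_const, smul_eq_mul, mul_comm]; rfl
    · refine Finset.sum_congr rfl (fun j _ => ?_)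
      simp_rw [← smul_eq_mul]
      rw [integral_smul]
  have key : ∀ n : ℕ,
      (∫ ω in A, gridH h n (X ω) ∂μ) ≤ ∫ ω in A, gridH h n (Z ω) ∂μ := by
    intro n
    rw [repr X hXae hXneg n, repr Z hZae hZneg n]
    refine add_le_add_right (Finset.sum_le_sum (fun j _ => ?_)) _
    refine mul_le_mul_of_nonneg_left ?_ (gridSlope_sub_nonneg hm hc n j)
    have hexX : (fun ω => min (X ω) (gridPt n (j+1)) - gridPt n (j+1))
        = fun ω => -(max (gridPt n (j+1) - X ω) 0) := by
      funext ω; exact min_sub_eq_neg_max _ _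
    have hexZ : (fun ω => min (Z ω) (gridPt n (j+1)) - gridPt n (j+1))
        = fun ω => -(max (gridPt n (j+1) - Z ω) 0) := by
      funext ω; exact min_sub_eq_neg_max _ _
    rw [hexX, hexZ, integral_neg, integral_neg, neg_le_neg_iff]
    exact hlevel (gridPt n (j+1))
  have hboundX : Integrable (fun ω => 2*|h (X ω)| + (γ + |h 0| + |h 1|)) (μ.restrict A) := by
    refine Integrable.add ?_ (integrable_const _)
    simpa [Real.norm_eq_abs] using hX.norm.const_mul 2
  have hboundZ : Integrable (fun ω => 2*|h (Z ω)| + (γ + |h 0| + |h 1|)) (μ.restrict A) := by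
    refine Integrable.add ?_ (integrable_const _)
    simpa [Real.norm_eq_abs] using hZ.norm.const_mul 2
  have hXt : Tendsto (fun n => ∫ ω in A, gridH h n (X ω) ∂μ) atTop
      (nhds (∫ ω in A, h (X ω) ∂μ)) := by
    refine tendsto_integral_of_dominated_convergence _ (fun n => ?_) hboundX (fun n => ?_) ?_
    · exact ((gridH_continuous h n).measurable.comp_aemeasurable hXae).aestronglyMeasurable
    · exact ae_of_all _ (fun ω => by
        rw [Real.norm_eq_abs]; exact gridH_abs hm hc hγ hLip n (X ω))
    · exact ae_of_all _ (fun ω => gridH_tendsto hm hc hcont (X ω))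
  have hZt : Tendsto (fun n => ∫ ω in A, gridH h n (Z ω) ∂μ) atTop
      (nhds (∫ ω in A, h (Z ω) ∂μ)) := by
    refine tendsto_integral_of_dominated_convergence _ (fun n => ?_) hboundZ (fun n => ?_) ?_
    · exact ((gridH_continuous h n).measurable.comp_aemeasurable hZae).aestronglyMeasurable
    · exact ae_of_all _ (fun ω => by
        rw [Real.norm_eq_abs]; exact gridH_abs hm hc hγ hLip n (Z ω))
    · exact ae_of_all _ (fun ω => gridH_tendsto hm hc hcont (Z ω))
  exact le_of_tendsto_of_tendsto' hXt hZt key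

lemma main_ineq {Ω : Type*} [MeasurableSpace Ω] (μ : Measure Ω) [IsFiniteMeasure μ]
    (A : Set Ω) (X Z : Ω → ℝ)
    (hXae : AEMeasurable X (μ.restrict A)) (hZae : AEMeasurable Z (μ.restrict A))
    (hXneg : IntegrableOn (fun ω => max (-X ω) 0) A μ)
    (hZneg : IntegrableOn (fun ω => max (-Z ω) 0) A μ)
    (hlevel : ∀ s : ℝ, (∫ ω in A, max (s - Z ω) 0 ∂μ) ≤ ∫ ω in A, max (s - X ω) 0 ∂μ)
    {h : ℝ → ℝ} (hm : Monotone h) (hc : ConcaveOn ℝ Set.univ h)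
    (hX : IntegrableOn (fun ω => h (X ω)) A μ) (hZ : IntegrableOn (fun ω => h (Z ω)) A μ) :
    (∫ ω in A, h (X ω) ∂μ) ≤ ∫ ω in A, h (Z ω) ∂μ := by
  have hcont : Continuous h := continuousOn_univ.mp (hc.continuousOn isOpen_univ)
  have hWint : ∀ (W : Ω → ℝ) (m : ℕ), AEMeasurable W (μ.restrict A) →
      IntegrableOn (fun ω => h (W ω)) A μ →
      IntegrableOn (fun ω => lowerAffine h (-(m+1:ℝ)) (W ω)) A μ := by
    intro W m hWae hWi
    refine Integrable.mono' (g := fun ω => |h (W ω)| + |h (-(m+1:ℝ))|) ?_ ?_ ?_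
    · simpa [Real.norm_eq_abs] using hWi.norm.add (integrable_const |h (-(m+1:ℝ))|)
    · exact ((la_cont (-(m+1:ℝ)) hcont).measurable.comp_aemeasurable hWae).aestronglyMeasurable
    · exact ae_of_all _ (fun ω => by
        rw [Real.norm_eq_abs]; exact la_abs hm hc _ (W ω))
  have key : ∀ m : ℕ,
      (∫ ω in A, lowerAffine h (-(m+1:ℝ)) (X ω) ∂μ)
        ≤ ∫ ω in A, lowerAffine h (-(m+1:ℝ)) (Z ω) ∂μ := by
    intro m
    exact main_ineq_nice μ A X Z hXae hZae hXneg hZneg hlevel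
      (la_mono hm hc _) (la_conc hm hc _)
      (ts_nonneg hm hc _) (la_lip hm hc _)
      (hWint X m hXae hX) (hWint Z m hZae hZ)
  have hdom : ∀ (W : Ω → ℝ) (m : ℕ) (ω : Ω),
      |lowerAffine h (-(m+1:ℝ)) (W ω)| ≤ 2*|h (W ω)| + |h (-1:ℝ)| := by
    intro W m ω
    have h1 : h (W ω) ≤ lowerAffine h (-(m+1:ℝ)) (W ω) := la_ge hc _ (W ω)
    have h2 : lowerAffine h (-(m+1:ℝ)) (W ω) ≤ lowerAffine h (-1:ℝ) (W ω) := by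
      refine la_le_la hc (-(m+1:ℝ)) ?_ (W ω)
      have : (0:ℝ) ≤ (m:ℝ) := Nat.cast_nonneg m
      linarith
    have h3 : |lowerAffine h (-1:ℝ) (W ω)| ≤ |h (W ω)| + |h (-1:ℝ)| := la_abs hm hc _ (W ω)
    have h4 := le_abs_self (lowerAffine h (-1:ℝ) (W ω))
    have h5 := neg_abs_le (h (W ω))
    have h6 := abs_nonneg (h (-1:ℝ))
    have h7 := abs_nonneg (h (W ω))
    rw [abs_le]
    constructor <;> linarith
  have htend : ∀ (W : Ω → ℝ) (ω : Ω),
      Tendsto (fun m : ℕ => lowerAffine h (-(m+1:ℝ)) (W ω)) atTop (nhds (h (W ω))) := by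
    intro W ω
    have hev : ∀ᶠ m : ℕ in atTop, lowerAffine h (-(m+1:ℝ)) (W ω) = h (W ω) := by
      filter_upwards [eventually_ge_atTop (Nat.ceil (-(W ω)))] with m hm'
      refine la_eq _ ?_
      have hle : -(W ω) ≤ (m:ℝ) := le_trans (Nat.le_ceil _) (Nat.cast_le.2 hm')
      linarith
    exact Tendsto.congr' (hev.mono fun m hm' => hm'.symm) tendsto_const_nhds
  have hbX : Integrable (fun ω => 2*|h (X ω)| + |h (-1:ℝ)|) (μ.restrict A) := by
    refine Integrable.add ?_ (integrable_const _)
    simpa [Real.norm_eq_abs] using hX.norm.const_mul 2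
  have hbZ : Integrable (fun ω => 2*|h (Z ω)| + |h (-1:ℝ)|) (μ.restrict A) := by
    refine Integrable.add ?_ (integrable_const _)
    simpa [Real.norm_eq_abs] using hZ.norm.const_mul 2
  have hXt : Tendsto (fun m : ℕ => ∫ ω in A, lowerAffine h (-(m+1:ℝ)) (X ω) ∂μ) atTop
      (nhds (∫ ω in A, h (X ω) ∂μ)) := by
    refine tendsto_integral_of_dominated_convergence _ (fun m => ?_) hbX (fun m => ?_) ?_
    · exact ((la_cont (-(m+1:ℝ)) hcont).measurable.comp_aemeasurable hXae).aestronglyMeasurable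
    · exact ae_of_all _ (fun ω => by rw [Real.norm_eq_abs]; exact hdom X m ω)
    · exact ae_of_all _ (fun ω => htend X ω)
  have hZt : Tendsto (fun m : ℕ => ∫ ω in A, lowerAffine h (-(m+1:ℝ)) (Z ω) ∂μ) atTop
      (nhds (∫ ω in A, h (Z ω) ∂μ)) := by
    refine tendsto_integral_of_dominated_convergence _ (fun m => ?_) hbZ (fun m => ?_) ?_
    · exact ((la_cont (-(m+1:ℝ)) hcont).measurable.comp_aemeasurable hZae).aestronglyMeasurable
    · exact ae_of_all _ (fun ω => by rw [Real.norm_eq_abs]; exact hdom Z m ω)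
    · exact ae_of_all _ (fun ω => htend Z ω)
  exact le_of_tendsto_of_tendsto' hXt hZt key

theorem sosd_lower_bound
    {Ω : Type*} [MeasurableSpace Ω] (μ : Measure Ω) [IsProbabilityMeasure μ]
    (U Y1 : Ω → ℝ) (F0 F1 Q0 Q1 : ℝ → ℝ)
    (hF0 : IsCDF F0) (hF1 : IsCDF F1)
    (hQ0 : ∀ u, Q0 u = sInf {y : ℝ | u ≤ F0 y})
    (hQ1 : ∀ u, Q1 u = sInf {y : ℝ | u ≤ F1 y})
    (hU : Measurable U) (hUlaw : μ.map U = volume.restrict (Set.Ioo (0:ℝ) 1))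
    (hY1 : Measurable Y1) (hY1law : ∀ y, (μ {ω | Y1 ω ≤ y}).toReal = F1 y)
    (a b : ℝ) (ha : 0 ≤ a) (hab : a < b) (hb : b ≤ 1)
    (h : ℝ → ℝ) (hh_mono : Monotone h) (hh_conc : ConcaveOn ℝ Set.univ h)
    (hint1 : IntegrableOn (fun ω => h (Q1 (b - U ω) - Q0 (U ω))) {ω | a < U ω ∧ U ω < b} μ)
    (hint2 : IntegrableOn (fun ω => h (Y1 ω - Q0 (U ω))) {ω | a < U ω ∧ U ω < b} μ) :
    (∫ ω in {ω | a < U ω ∧ U ω < b}, h (Q1 (b - U ω) - Q0 (U ω)) ∂μ) ≤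
      ∫ ω in {ω | a < U ω ∧ U ω < b}, h (Y1 ω - Q0 (U ω)) ∂μ := by
  set A : Set Ω := {ω | a < U ω ∧ U ω < b} with hAdef
  have hA : MeasurableSet A := by
    have : A = U ⁻¹' (Set.Ioo a b) := rfl
    rw [this]
    exact hU measurableSet_Ioo
  have hUA : ∀ {ω : Ω}, ω ∈ A → U ω ∈ Set.Ioo a b := fun hω => ⟨hω.1, hω.2⟩
  -- Galois connections
  have gal0 : ∀ u : ℝ, 0 < u → u < 1 → ∀ y, (Q0 u ≤ y ↔ u ≤ F0 y) := by
    intro u h0 h1 y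
    rw [hQ0 u]
    exact quantile_le_iff hF0 h0 h1 y
  have gal1 : ∀ u : ℝ, 0 < u → u < 1 → ∀ y, (Q1 u ≤ y ↔ u ≤ F1 y) := by
    intro u h0 h1 y
    rw [hQ1 u]
    exact quantile_le_iff hF1 h0 h1 y
  have hmemu : ∀ {u : ℝ}, u ∈ Set.Ioo a b → 0 < u ∧ u < 1 := by
    intro u hu
    exact ⟨lt_of_le_of_lt ha hu.1, lt_of_lt_of_le hu.2 hb⟩
  have hmembu : ∀ {u : ℝ}, u ∈ Set.Ioo a b → 0 < b - u ∧ b - u < 1 := by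
    intro u hu
    have h1 := hu.1
    have h2 := hu.2
    constructor
    · linarith
    · linarith
  -- monotone measurable versions of the quantile transforms
  have m0 : MonotoneOn Q0 (Set.Ioo a b) := by
    intro u hu v hv huv
    obtain ⟨hu0, hu1⟩ := hmemu hu
    obtain ⟨hv0, hv1⟩ := hmemu hv
    rw [gal0 u hu0 hu1]
    exact le_trans huv ((gal0 v hv0 hv1 (Q0 v)).mp le_rfl)
  have m1 : MonotoneOn (fun u => -(Q1 (b - u))) (Set.Ioo a b) := by
    intro u hu v hv huv
    obtain ⟨hu0, hu1⟩ := hmembu hu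
    obtain ⟨hv0, hv1⟩ := hmembu hv
    simp only [neg_le_neg_iff]
    rw [gal1 (b - v) hv0 hv1]
    refine le_trans (by linarith : b - v ≤ b - u) ?_
    exact (gal1 (b - u) hu0 hu1 (Q1 (b - u))).mp le_rfl
  set q0g : ℝ → ℝ := (Set.Ioo a b).indicator Q0 with hq0gdef
  have hq0g : Measurable q0g := measurable_indicator_monotoneOn m0
  set q1g : ℝ → ℝ := fun u => -((Set.Ioo a b).indicator (fun u => -(Q1 (b - u))) u) with hq1gdef
  have hq1g : Measurable q1g := (measurable_indicator_monotoneOn m1).neg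
  have hq0gA : ∀ {u : ℝ}, u ∈ Set.Ioo a b → q0g u = Q0 u := by
    intro u hu
    exact Set.indicator_of_mem hu Q0
  have hq1gA : ∀ {u : ℝ}, u ∈ Set.Ioo a b → q1g u = Q1 (b - u) := by
    intro u hu
    show -((Set.Ioo a b).indicator (fun u => -(Q1 (b - u))) u) = Q1 (b - u)
    rw [Set.indicator_of_mem hu]
    ring
  set X : Ω → ℝ := fun ω => Q1 (b - U ω) - Q0 (U ω) with hXdef
  set Z : Ω → ℝ := fun ω => Y1 ω - Q0 (U ω) with hZdef
  have hXae : AEMeasurable X (μ.restrict A) := by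
    have hg : Measurable (fun ω => q1g (U ω) - q0g (U ω)) := (hq1g.comp hU).sub (hq0g.comp hU)
    refine hg.aemeasurable.congr ?_
    rw [Filter.EventuallyEq, ae_restrict_iff' hA]
    refine ae_of_all _ (fun ω hω => ?_)
    show q1g (U ω) - q0g (U ω) = Q1 (b - U ω) - Q0 (U ω)
    rw [hq1gA (hUA hω), hq0gA (hUA hω)]
  have hZae : AEMeasurable Z (μ.restrict A) := by
    have hg : Measurable (fun ω => Y1 ω - q0g (U ω)) := hY1.sub (hq0g.comp hU)
    refine hg.aemeasurable.congr ?_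
    rw [Filter.EventuallyEq, ae_restrict_iff' hA]
    refine ae_of_all _ (fun ω hω => ?_)
    show Y1 ω - q0g (U ω) = Y1 ω - Q0 (U ω)
    rw [hq0gA (hUA hω)]
  -- pushforward computations
  have hmap : ∀ S : Set ℝ, MeasurableSet S → μ (U ⁻¹' S) = volume (S ∩ Set.Ioo 0 1) := by
    intro S hS
    rw [← Measure.map_apply hU hS, hUlaw, Measure.restrict_apply hS]
  have hIoo : ∀ m : ℝ, a ≤ m → μ (U ⁻¹' Set.Ioo m b) = ENNReal.ofReal (b - m) := by
    intro m hm
    have hsub : Set.Ioo m b ⊆ Set.Ioo (0:ℝ) 1 := fun x hx =>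
      Set.mem_Ioo.mpr ⟨lt_of_le_of_lt (le_trans ha hm) hx.1, lt_of_lt_of_le hx.2 hb⟩
    rw [hmap _ measurableSet_Ioo, Set.inter_eq_self_of_subset_left hsub, Real.volume_Ioo]
  have hF1law : ∀ r : ℝ, μ {ω | Y1 ω ≤ r} = ENNReal.ofReal (F1 r) := by
    intro r
    rw [← hY1law r, ENNReal.ofReal_toReal (measure_ne_top μ _)]
  -- trivial case: h constant
  by_cases hcst : ∀ z : ℝ, h z = h 0
  · have heq2 : (fun ω => h (Q1 (b - U ω) - Q0 (U ω))) = fun ω => h (Y1 ω - Q0 (U ω)) :=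
      funext fun ω => (hcst _).trans (hcst _).symm
    rw [heq2]
  · push_neg at hcst
    obtain ⟨z0, hz0⟩ := hcst
    obtain ⟨z1, z2, hz1, h12, hval⟩ : ∃ z1 z2 : ℝ, z1 ≤ 0 ∧ z1 < z2 ∧ h z1 < h z2 := by
      rcases lt_trichotomy z0 0 with hlt | heq | hgt
      · exact ⟨z0, 0, hlt.le, hlt, lt_of_le_of_ne (hh_mono hlt.le) hz0⟩
      · rw [heq] at hz0
        exact absurd rfl hz0
      · exact ⟨0, z0, le_rfl, hgt, lt_of_le_of_ne (hh_mono hgt.le) (Ne.symm hz0)⟩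
    have hXneg : IntegrableOn (fun ω => max (-X ω) 0) A μ :=
      negpart_int μ A X hXae hh_conc hz1 h12 hval hint1
    have hZneg : IntegrableOn (fun ω => max (-Z ω) 0) A μ :=
      negpart_int μ A Z hZae hh_conc hz1 h12 hval hint2
    -- the level inequality
    have hlevel : ∀ s : ℝ, (∫ ω in A, max (s - Z ω) 0 ∂μ) ≤ ∫ ω in A, max (s - X ω) 0 ∂μ := by
      intro s
      have hWm : Measurable (fun ω => s + q0g (U ω)) := measurable_const.add (hq0g.comp hU)
      have hVX : Measurable (fun ω => q1g (U ω)) := hq1g.comp hU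
      -- Z side
      have hZeq : (∫⁻ ω in A, ENNReal.ofReal (max (s - Z ω) 0) ∂μ)
          = ∫⁻ r, μ ({ω | Y1 ω ≤ r ∧ r < s + q0g (U ω)} ∩ A) ∂volume := by
        have hcong : (∫⁻ ω in A, ENNReal.ofReal (max (s - Z ω) 0) ∂μ)
            = ∫⁻ ω in A, volume (Set.Ico (Y1 ω) (s + q0g (U ω))) ∂μ := by
          refine setLIntegral_congr_fun hA (fun ω hω => ?_)
          rw [Real.volume_Ico, ofReal_max_zero, hq0gA (hUA hω)]
          congr 1
          show s - (Y1 ω - Q0 (U ω)) = s + Q0 (U ω) - Y1 ω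
          ring
        rw [hcong, lintegral_Ico_swap (μ.restrict A) hY1 hWm]
        refine lintegral_congr fun r => ?_
        have hmeas : MeasurableSet {ω | Y1 ω ≤ r ∧ r < s + q0g (U ω)} :=
          (measurableSet_le hY1 measurable_const).inter (measurableSet_lt measurable_const hWm)
        rw [Measure.restrict_apply hmeas]
      -- X side
      have hXeq : (∫⁻ ω in A, ENNReal.ofReal (max (s - X ω) 0) ∂μ)
          = ∫⁻ r, μ ({ω | q1g (U ω) ≤ r ∧ r < s + q0g (U ω)} ∩ A) ∂volume := by
        have hcong : (∫⁻ ω in A, ENNReal.ofReal (max (s - X ω) 0) ∂μ)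
            = ∫⁻ ω in A, volume (Set.Ico (q1g (U ω)) (s + q0g (U ω))) ∂μ := by
          refine setLIntegral_congr_fun hA (fun ω hω => ?_)
          rw [Real.volume_Ico, ofReal_max_zero, hq0gA (hUA hω), hq1gA (hUA hω)]
          congr 1
          show s - (Q1 (b - U ω) - Q0 (U ω)) = s + Q0 (U ω) - Q1 (b - U ω)
          ring
        rw [hcong, lintegral_Ico_swap (μ.restrict A) hVX hWm]
        refine lintegral_congr fun r => ?_
        have hmeas : MeasurableSet {ω | q1g (U ω) ≤ r ∧ r < s + q0g (U ω)} :=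
          (measurableSet_le hVX measurable_const).inter (measurableSet_lt measurable_const hWm)
        rw [Measure.restrict_apply hmeas]
      -- pointwise (in r) comparison of the two measures
      have hperr : ∀ r : ℝ, μ ({ω | Y1 ω ≤ r ∧ r < s + q0g (U ω)} ∩ A)
          ≤ μ ({ω | q1g (U ω) ≤ r ∧ r < s + q0g (U ω)} ∩ A) := by
        intro r
        set m3 : ℝ := max (max a (F0 (r - s))) (b - F1 r) with hm3
        have hQ0gal : ∀ u : ℝ, u ∈ Set.Ioo a b → (r - s < Q0 u ↔ F0 (r - s) < u) := by
          intro u hu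
          obtain ⟨h0, h1⟩ := hmemu hu
          constructor
          · intro hlt
            by_contra hcon
            push_neg at hcon
            have := (gal0 u h0 h1 (r - s)).mpr hcon
            linarith
          · intro hlt
            by_contra hcon
            push_neg at hcon
            have := (gal0 u h0 h1 (r - s)).mp hcon
            linarith
        have hle1 : μ ({ω | Y1 ω ≤ r ∧ r < s + q0g (U ω)} ∩ A) ≤ ENNReal.ofReal (F1 r) := by
          rw [← hF1law r]
          refine measure_mono ?_
          rintro ω ⟨⟨h1, _⟩, _⟩
          exact h1
        have hle2 : μ ({ω | Y1 ω ≤ r ∧ r < s + q0g (U ω)} ∩ A)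
            ≤ ENNReal.ofReal (b - max a (F0 (r - s))) := by
          rw [← hIoo (max a (F0 (r - s))) (le_max_left _ _)]
          refine measure_mono ?_
          rintro ω ⟨⟨_, h2⟩, hω⟩
          have hu := hUA hω
          rw [hq0gA hu] at h2
          have hF0lt := (hQ0gal (U ω) hu).mp (by linarith)
          exact ⟨max_lt hu.1 hF0lt, hu.2⟩
        have ham3 : a ≤ m3 := le_trans (le_max_left a _) (le_max_left _ _)
        have hge : ENNReal.ofReal (b - m3)
            ≤ μ ({ω | q1g (U ω) ≤ r ∧ r < s + q0g (U ω)} ∩ A) := by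
          rw [← hIoo m3 ham3]
          refine measure_mono ?_
          intro ω hω
          have hu : U ω ∈ Set.Ioo m3 b := hω
          have huab : U ω ∈ Set.Ioo a b := ⟨lt_of_le_of_lt ham3 hu.1, hu.2⟩
          obtain ⟨hb0, hb1⟩ := hmembu huab
          refine ⟨⟨?_, ?_⟩, huab⟩
          · rw [hq1gA huab, gal1 (b - U ω) hb0 hb1 r]
            have hm : b - F1 r ≤ m3 := le_max_right _ _
            have := hu.1
            linarith
          · rw [hq0gA huab]
            have hF0m : F0 (r - s) ≤ m3 := le_trans (le_max_right a _) (le_max_left _ _)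
            have := (hQ0gal (U ω) huab).mpr (lt_of_le_of_lt hF0m hu.1)
            linarith
        refine le_trans (le_trans (le_min hle1 hle2) ?_) hge
        rw [min_ofReal]
        refine ENNReal.ofReal_le_ofReal ?_
        conv_rhs => rw [hm3, sub_max_eq_min]
        have hbb : b - (b - F1 r) = F1 r := by ring
        rw [hbb, min_comm]
      -- integrability of the positive parts
      have hintZ : Integrable (fun ω => max (s - Z ω) 0) (μ.restrict A) := by
        refine Integrable.mono' (g := fun ω => |s| + max (-Z ω) 0)
          ((integrable_const _).add hZneg)
          (((aemeasurable_const.sub hZae).max aemeasurable_const).aestronglyMeasurable) ?_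
        refine ae_of_all _ (fun ω => ?_)
        rw [Real.norm_eq_abs, abs_of_nonneg (le_max_right _ _)]
        have h1 := le_abs_self s
        have h0 := abs_nonneg s
        have h2 := le_max_left (-(Z ω)) (0:ℝ)
        have h3 := le_max_right (-(Z ω)) (0:ℝ)
        rcases le_total (s - Z ω) 0 with hsz | hsz
        · rw [max_eq_right hsz]; linarith
        · rw [max_eq_left hsz]; linarith
      have hintX : Integrable (fun ω => max (s - X ω) 0) (μ.restrict A) := by
        refine Integrable.mono' (g := fun ω => |s| + max (-X ω) 0)
          ((integrable_const _).add hXneg)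
          (((aemeasurable_const.sub hXae).max aemeasurable_const).aestronglyMeasurable) ?_
        refine ae_of_all _ (fun ω => ?_)
        rw [Real.norm_eq_abs, abs_of_nonneg (le_max_right _ _)]
        have h1 := le_abs_self s
        have h0 := abs_nonneg s
        have h2 := le_max_left (-(X ω)) (0:ℝ)
        have h3 := le_max_right (-(X ω)) (0:ℝ)
        rcases le_total (s - X ω) 0 with hsz | hsz
        · rw [max_eq_right hsz]; linarith
        · rw [max_eq_left hsz]; linarith
      have hBZ : (∫ ω in A, max (s - Z ω) 0 ∂μ)
          = (∫⁻ ω in A, ENNReal.ofReal (max (s - Z ω) 0) ∂μ).toReal :=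
        integral_eq_lintegral_of_nonneg_ae (ae_of_all _ (fun ω => le_max_right _ _)) hintZ.1
      have hBX : (∫ ω in A, max (s - X ω) 0 ∂μ)
          = (∫⁻ ω in A, ENNReal.ofReal (max (s - X ω) 0) ∂μ).toReal :=
        integral_eq_lintegral_of_nonneg_ae (ae_of_all _ (fun ω => le_max_right _ _)) hintX.1
      have hfinX : (∫⁻ ω in A, ENNReal.ofReal (max (s - X ω) 0) ∂μ) ≠ ⊤ := by
        have hle : (∫⁻ ω in A, ENNReal.ofReal (max (s - X ω) 0) ∂μ)
            ≤ ∫⁻ ω in A, ‖max (s - X ω) 0‖ₑ ∂μ :=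
          lintegral_mono (fun ω => Real.ofReal_le_enorm _)
        exact ne_top_of_le_ne_top (lt_top_iff_ne_top.mp hintX.2) hle
      rw [hBZ, hBX]
      refine ENNReal.toReal_mono hfinX ?_
      rw [hZeq, hXeq]
      exact lintegral_mono hperr
    exact main_ineq μ A X Z hXae hZae hXneg hZneg hlevel hh_mono hh_conc hint1 hint2
end
end

section
/- Let h : ℝ → ℝ be nondecreasing and concave, Q0 and Q1 nondecreasing functions on (0,1), 0 ≤ a < b ≤ 1, and suppose φ, ψ satisfy φ(x) + ψ(y) ≤ h(Q1(x) - Q0(y)) for all x in (0, b-a) and y in (a,b), with equality when x = b - y. Then φ is nondecreasing on (0, b-a). -/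
open MeasureTheory Set Filter Function

noncomputable section

theorem kantorovich_potential_monotone
    (h Q0 Q1 φ ψ : ℝ → ℝ)
    (hh_mono : Monotone h) (hh_conc : ConcaveOn ℝ Set.univ h)
    (hQ0 : MonotoneOn Q0 (Set.Ioo (0:ℝ) 1)) (hQ1 : MonotoneOn Q1 (Set.Ioo (0:ℝ) 1))
    (a b : ℝ) (ha : 0 ≤ a) (hab : a < b) (hb : b ≤ 1)
    (hle : ∀ x ∈ Set.Ioo (0:ℝ) (b - a), ∀ y ∈ Set.Ioo a b, φ x + ψ y ≤ h (Q1 x - Q0 y))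
    (heq : ∀ y ∈ Set.Ioo a b, φ (b - y) + ψ y = h (Q1 (b - y) - Q0 y)) :
    MonotoneOn φ (Set.Ioo (0:ℝ) (b - a)) := by
  intro x hx x' hx' hxx'
  have hy : b - x' ∈ Set.Ioo a b := ⟨by linarith [hx'.2], by linarith [hx'.1]⟩
  have hsub : Set.Ioo (0:ℝ) (b - a) ⊆ Set.Ioo (0:ℝ) 1 :=
    Set.Ioo_subset_Ioo le_rfl (by linarith)
  have h1 : φ x + ψ (b - x') ≤ h (Q1 x - Q0 (b - x')) := hle x hx _ hy
  have h2 : φ x' + ψ (b - x') = h (Q1 x' - Q0 (b - x')) := by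
    have := heq (b - x') hy
    simpa using this
  have hQ : Q1 x ≤ Q1 x' := hQ1 (hsub hx) (hsub hx') hxx'
  have h3 : h (Q1 x - Q0 (b - x')) ≤ h (Q1 x' - Q0 (b - x')) := hh_mono (by linarith)
  linarith
end
end

section
/- Let U ~ Uniform(0,1), F1 a cdf with left-continuous quantile Q1, F0 a cdf with left-continuous quantile Q0, 0 ≤ a < b ≤ 1, and ε > 0. Set Δ = (b - a) - sup over x in (a,b) of max(b - x - 1 + F1(Q0(x)), 0), and suppose U1 = U - a + 1 - Δ + ε whenever a < U < a + Δ - ε. Then for every u in (a, a + Δ - ε), F1(Q1(u - a + 1 - Δ + ε)) > F1(Q0(u)), and hence Q1(u - a + 1 - Δ + ε) > Q0(u); that is, all individuals with rank u in (a, a + Δ - ε) are winners under the coupling Y1 = Q1(U1), Y0 = Q0(U). -/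
open MeasureTheory Set Filter Function

noncomputable section

lemma IsCDF.le_one {F : ℝ → ℝ} (hF : IsCDF F) (x : ℝ) : F x ≤ 1 :=
  Monotone.ge_of_tendsto hF.1 hF.2.2.2 x

lemma IsCDF.quantile_prop {F : ℝ → ℝ} (hF : IsCDF F) {v : ℝ} (hv0 : 0 < v) (hv1 : v < 1) :
    v ≤ F (sInf {y : ℝ | v ≤ F y}) := by
  obtain ⟨M, hM⟩ : ∃ M, v ≤ F M := by
    have := hF.2.2.2.eventually (eventually_ge_nhds hv1)
    exact this.exists
  obtain ⟨m, hm⟩ : ∃ m, ∀ y ≤ m, F y < v :=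
    eventually_atBot.mp (hF.2.2.1.eventually (eventually_lt_nhds hv0))
  set q := sInf {y : ℝ | v ≤ F y} with hq
  have hne : {y : ℝ | v ≤ F y}.Nonempty := ⟨M, hM⟩
  have hbdd : BddBelow {y : ℝ | v ≤ F y} := by
    refine ⟨m, fun y hy => ?_⟩
    by_contra h
    exact absurd hy (not_le.mpr (hm y (le_of_not_ge h)))
  have hgt : ∀ x ∈ Set.Ioi q, v ≤ F x := by
    intro x hx
    obtain ⟨y, hy, hyx⟩ := (csInf_lt_iff hbdd hne).mp hx
    exact le_trans hy (hF.1 hyx.le)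
  have hcont : Tendsto F (nhdsWithin q (Set.Ioi q)) (nhds (F q)) :=
    (hF.2.1 q).mono_left (nhdsWithin_mono q Set.Ioi_subset_Ici_self)
  exact ge_of_tendsto hcont (eventually_nhdsWithin_of_forall hgt)

theorem winner_upper_bound_near_attained
    {Ω : Type*} [MeasurableSpace Ω] (μ : Measure Ω) [IsProbabilityMeasure μ]
    (U U1 : Ω → ℝ) (F0 F1 Q0 Q1 : ℝ → ℝ)
    (hF0 : IsCDF F0) (hF1 : IsCDF F1)
    (hQ0 : ∀ u, Q0 u = sInf {y : ℝ | u ≤ F0 y})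
    (hQ1 : ∀ u, Q1 u = sInf {y : ℝ | u ≤ F1 y})
    (hU : Measurable U) (hUlaw : μ.map U = volume.restrict (Set.Ioo (0:ℝ) 1))
    (a b : ℝ) (ha : 0 ≤ a) (hab : a < b) (hb : b ≤ 1) (ε : ℝ) (hε : 0 < ε)
    (Δ : ℝ)
    (hΔdef : Δ = (b - a) - ⨆ x ∈ Set.Ioo a b, max (b - x - 1 + F1 (Q0 x)) 0)
    (hU1 : ∀ ω, a < U ω → U ω < a + Δ - ε → U1 ω = U ω - a + 1 - Δ + ε) :
    ∀ u ∈ Set.Ioo a (a + Δ - ε),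
      F1 (Q0 u) < F1 (Q1 (u - a + 1 - Δ + ε)) ∧ Q0 u < Q1 (u - a + 1 - Δ + ε) := by
  set g : ℝ → ℝ := fun x => max (b - x - 1 + F1 (Q0 x)) 0 with hg
  set S : ℝ := ⨆ x ∈ Set.Ioo a b, g x with hS
  have hgle : ∀ x, (⨆ _ : x ∈ Set.Ioo a b, g x) ≤ b - a := by
    intro x
    by_cases hx : x ∈ Set.Ioo a b
    · rw [ciSup_pos hx]
      have : F1 (Q0 x) ≤ 1 := hF1.le_one _
      simp only [hg]
      refine max_le (by linarith [hx.1]) (by linarith)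
    · haveI : IsEmpty (x ∈ Set.Ioo a b) := ⟨fun h => hx h⟩
      rw [Real.iSup_of_isEmpty]
      linarith
  have hbdd : BddAbove (Set.range fun x => ⨆ _ : x ∈ Set.Ioo a b, g x) := by
    refine ⟨b - a, ?_⟩
    rintro _ ⟨x, rfl⟩
    exact hgle x
  have hle : ∀ x ∈ Set.Ioo a b, g x ≤ S := by
    intro x hx
    have h1 : (⨆ _ : x ∈ Set.Ioo a b, g x) ≤ S := le_ciSup hbdd x
    rwa [ciSup_pos hx] at h1
  have hS0 : 0 ≤ S := by
    have := hle ((a+b)/2) ⟨by linarith, by linarith⟩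
    exact le_trans (le_max_right _ _) this
  have hΔle : Δ ≤ b - a := by rw [hΔdef]; linarith
  intro u hu
  obtain ⟨hu1, hu2⟩ := hu
  have hub : u < b := by linarith
  set v : ℝ := u - a + 1 - Δ + ε with hv
  have hv0 : 0 < v := by
    have hba : b - a ≤ 1 := by linarith
    rw [hv]; linarith
  have hv1 : v < 1 := by rw [hv]; linarith
  have hkey : F1 (Q0 u) ≤ u - a + 1 - Δ := by
    have := hle u ⟨hu1, hub⟩
    have h2 : b - u - 1 + F1 (Q0 u) ≤ S := le_trans (le_max_left _ _) this
    have h3 : S = b - a - Δ := by rw [hΔdef]; ring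
    linarith
  have hQprop : v ≤ F1 (Q1 v) := by
    rw [hQ1]; exact hF1.quantile_prop hv0 hv1
  have h1 : F1 (Q0 u) < F1 (Q1 v) := lt_of_lt_of_le (by linarith) hQprop
  refine ⟨h1, ?_⟩
  by_contra h
  exact absurd (hF1.1 (le_of_not_gt h)) (not_le.mpr h1)
end
end

section
/- Let F0, F1 be cdfs with left-continuous quantiles Q0, Q1, U ~ Uniform(0,1), Y0 = Q0(U), Y1 with cdf F1 under any coupling, and 0 < b ≤ 1. If the comonotone lower bound is strictly positive, i.e., ∫_0^b [Q1(u) - Q0(u)] du > 0, then E[(Y1 - Y0) 1{U < b}] > 0; in particular the subgroup average treatment effect E[Y1 - Y0 | U < b] is strictly positive for every joint distribution consistent with the marginals. -/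
open MeasureTheory Set Filter Function
open scoped ENNReal

noncomputable section

/-- clamp to `[-n, n]` -/
def clampN (n : ℕ) (x : ℝ) : ℝ := max (min x n) (-(n:ℝ))

lemma clampN_le (n : ℕ) (x : ℝ) : clampN n x ≤ n :=
  max_le (min_le_right _ _) (neg_le_self (by positivity))

lemma neg_le_clampN (n : ℕ) (x : ℝ) : -(n:ℝ) ≤ clampN n x := le_max_right _ _

lemma abs_clampN_le (n : ℕ) (x : ℝ) : |clampN n x| ≤ n :=
  abs_le.2 ⟨by simpa using neg_le_clampN n x, clampN_le n x⟩

lemma clampN_lipschitz (n : ℕ) (x y : ℝ) : |clampN n x - clampN n y| ≤ |x - y| := by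
  calc |clampN n x - clampN n y| ≤ |min x n - min y n| := abs_max_sub_max_le_abs _ _ _
    _ ≤ max |x - y| |(n:ℝ) - n| := abs_min_sub_min_le_max _ _ _ _
    _ = |x - y| := by simp

lemma clampN_eq_self {n : ℕ} {x : ℝ} (h : |x| ≤ n) : clampN n x = x := by
  rw [abs_le] at h
  rw [clampN, min_eq_left h.2, max_eq_left h.1]

lemma lt_clampN_add_iff {n : ℕ} {t x : ℝ} (ht : 0 ≤ t) (htn : t < 2 * n) :
    t < clampN n x + n ↔ t - n < x := by
  constructor
  · intro h
    have h' : t - n < max (min x n) (-(n:ℝ)) := by rw [clampN] at h; linarith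
    rcases max_cases (min x n) (-(n:ℝ)) with ⟨he, _⟩ | ⟨he, _⟩
    · rw [he] at h'
      exact lt_of_lt_of_le h' (min_le_left _ _)
    · rw [he] at h'; linarith
  · intro h
    have h1 : t - n < min x n := lt_min h (by linarith)
    have : t - n < clampN n x := lt_of_lt_of_le h1 (le_max_left _ _)
    linarith

lemma integral_nonneg_of_stoch_dom {Ω : Type*} [MeasurableSpace Ω] (ν : Measure Ω)
    [IsFiniteMeasure ν] {g1 g2 : Ω → ℝ} (hm1 : Measurable g1) (hm2 : Measurable g2)
    (hI : Integrable (fun ω => g1 ω - g2 ω) ν)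
    (hdom : ∀ y : ℝ, ν {ω | y < g2 ω} ≤ ν {ω | y < g1 ω}) :
    0 ≤ ∫ ω, (g1 ω - g2 ω) ∂ν := by
  have hmeas : ∀ {g : Ω → ℝ}, Measurable g → ∀ n : ℕ,
      Measurable (fun ω => clampN n (g ω)) := fun hg n =>
    (hg.min measurable_const).max measurable_const
  have hclint : ∀ {g : Ω → ℝ}, Measurable g → ∀ n : ℕ,
      Integrable (fun ω => clampN n (g ω)) ν := by
    intro g hg n
    refine Integrable.mono' (integrable_const (n:ℝ)) (hmeas hg n).aestronglyMeasurable ?_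
    exact Filter.Eventually.of_forall fun ω => by
      rw [Real.norm_eq_abs]; exact abs_clampN_le n (g ω)
  have key : ∀ n : ℕ, ∫ ω, clampN n (g2 ω) ∂ν ≤ ∫ ω, clampN n (g1 ω) ∂ν := by
    intro n
    set L : (Ω → ℝ) → ℝ≥0∞ := fun g => ∫⁻ ω, ENNReal.ofReal (clampN n (g ω) + n) ∂ν with hL
    have hnn : ∀ (g : Ω → ℝ) (ω : Ω), 0 ≤ clampN n (g ω) + n := fun g ω => by
      have := neg_le_clampN n (g ω); linarith
    have hrepr : ∀ {g : Ω → ℝ}, Measurable g →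
        ∫ ω, (clampN n (g ω) + n) ∂ν = (L g).toReal := by
      intro g hg
      rw [integral_eq_lintegral_of_nonneg_ae
        (Filter.Eventually.of_forall (hnn g))
        ((hmeas hg n).add measurable_const).aestronglyMeasurable]
    have hlayer : ∀ {g : Ω → ℝ}, Measurable g →
        L g = ∫⁻ t in Ioi (0:ℝ), ν {ω | t < clampN n (g ω) + n} := by
      intro g hg
      exact lintegral_eq_lintegral_meas_lt ν (Filter.Eventually.of_forall (hnn g))
        ((hmeas hg n).add measurable_const).aemeasurable
    have hcmp : L g2 ≤ L g1 := by
      rw [hlayer hm1, hlayer hm2]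
      refine lintegral_mono_ae ?_
      rw [ae_restrict_iff' measurableSet_Ioi]
      refine Filter.Eventually.of_forall fun t ht => ?_
      by_cases h2n : t < 2 * n
      · have e1 : {ω | t < clampN n (g1 ω) + n} = {ω | t - n < g1 ω} := by
          ext ω; exact lt_clampN_add_iff (le_of_lt ht) h2n
        have e2 : {ω | t < clampN n (g2 ω) + n} = {ω | t - n < g2 ω} := by
          ext ω; exact lt_clampN_add_iff (le_of_lt ht) h2n
        rw [e1, e2]; exact hdom (t - n)
      · have e2 : {ω | t < clampN n (g2 ω) + n} = (∅ : Set Ω) := by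
          ext ω
          simp only [mem_setOf_eq, mem_empty_iff_false, iff_false, not_lt]
          have := clampN_le n (g2 ω)
          push_neg at h2n
          linarith
        rw [e2]; simp
    have hfin : L g1 ≠ ⊤ := by
      have : L g1 ≤ ∫⁻ _, ENNReal.ofReal (2 * n) ∂ν := by
        refine lintegral_mono fun ω => ENNReal.ofReal_le_ofReal ?_
        have := clampN_le n (g1 ω); linarith
      refine ne_top_of_le_ne_top ?_ this
      rw [lintegral_const]
      exact ENNReal.mul_ne_top ENNReal.ofReal_ne_top (measure_ne_top ν univ)
    have h1 : ∫ ω, (clampN n (g2 ω) + n) ∂ν ≤ ∫ ω, (clampN n (g1 ω) + n) ∂ν := by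
      rw [hrepr hm1, hrepr hm2]
      exact ENNReal.toReal_mono hfin hcmp
    have e1 := integral_add (hclint hm1 n) (integrable_const (n:ℝ))
    have e2 := integral_add (hclint hm2 n) (integrable_const (n:ℝ))
    rw [e1, e2] at h1
    linarith
  -- dominated convergence
  have hFm : ∀ n : ℕ, AEStronglyMeasurable
      (fun ω => clampN n (g1 ω) - clampN n (g2 ω)) ν := fun n =>
    ((hmeas hm1 n).sub (hmeas hm2 n)).aestronglyMeasurable
  have hbound : ∀ n : ℕ, ∀ᵐ ω ∂ν,
      ‖clampN n (g1 ω) - clampN n (g2 ω)‖ ≤ |g1 ω - g2 ω| := fun n =>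
    Filter.Eventually.of_forall fun ω => by
      rw [Real.norm_eq_abs]; exact clampN_lipschitz n _ _
  have hlim : ∀ᵐ ω ∂ν, Tendsto (fun n => clampN n (g1 ω) - clampN n (g2 ω))
      atTop (nhds (g1 ω - g2 ω)) := by
    refine Filter.Eventually.of_forall fun ω => ?_
    refine Filter.Tendsto.congr' ?_ tendsto_const_nhds
    filter_upwards [Filter.eventually_ge_atTop (⌈|g1 ω|⌉₊ ⊔ ⌈|g2 ω|⌉₊)] with n hn
    have h1 : |g1 ω| ≤ n :=
      le_trans (Nat.le_ceil _) (Nat.cast_le.2 (le_trans (le_max_left _ _) hn))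
    have h2 : |g2 ω| ≤ n :=
      le_trans (Nat.le_ceil _) (Nat.cast_le.2 (le_trans (le_max_right _ _) hn))
    rw [clampN_eq_self h1, clampN_eq_self h2]
  have htend := tendsto_integral_of_dominated_convergence (fun ω => |g1 ω - g2 ω|)
    hFm hI.abs hbound hlim
  refine ge_of_tendsto' htend fun n => ?_
  rw [integral_sub (hclint hm1 n) (hclint hm2 n)]
  linarith [key n]

lemma cdf_quantile_galois {F : ℝ → ℝ} (hF : IsCDF F) {u : ℝ} (hu0 : 0 < u) (hu1 : u < 1)
    (y : ℝ) : sInf {z : ℝ | u ≤ F z} ≤ y ↔ u ≤ F y := by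
  obtain ⟨hmono, hrc, hbot, htop⟩ := hF
  set S := {z : ℝ | u ≤ F z} with hS
  have hne : S.Nonempty := by
    obtain ⟨z, hz⟩ := (htop.eventually (eventually_ge_nhds hu1)).exists
    exact ⟨z, hz⟩
  have hbdd : BddBelow S := by
    obtain ⟨z0, hz0⟩ := (hbot.eventually (eventually_lt_nhds hu0)).exists
    refine ⟨z0, fun z hz => ?_⟩
    by_contra h
    push_neg at h
    exact absurd (le_trans hz (hmono h.le)) (not_le.2 hz0)
  constructor
  · intro h
    have hmem : sInf S ∈ closure S := csInf_mem_closure hne hbdd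
    have hnb : (nhdsWithin (sInf S) S).NeBot := mem_closure_iff_nhdsWithin_neBot.1 hmem
    have hct : Tendsto F (nhdsWithin (sInf S) S) (nhds (F (sInf S))) :=
      (hrc (sInf S)).mono_left (nhdsWithin_mono _ (fun z hz => csInf_le hbdd hz))
    have hu : u ≤ F (sInf S) :=
      ge_of_tendsto hct (eventually_nhdsWithin_of_forall fun z hz => hz)
    exact le_trans hu (hmono h)
  · intro h
    exact csInf_le hbdd h

lemma lt_quantile_iff {F : ℝ → ℝ} (hF : IsCDF F) {u : ℝ} (hu0 : 0 < u) (hu1 : u < 1)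
    (y : ℝ) : y < sInf {z : ℝ | u ≤ F z} ↔ F y < u := by
  rw [← not_le, ← not_le, not_iff_not]
  exact cdf_quantile_galois hF hu0 hu1 y

theorem positive_lower_bound_certifies_positive_ste
    {Ω : Type*} [MeasurableSpace Ω] (μ : Measure Ω) [IsProbabilityMeasure μ]
    (U Y1 : Ω → ℝ) (F0 F1 Q0 Q1 : ℝ → ℝ)
    (hF0 : IsCDF F0) (hF1 : IsCDF F1)
    (hQ0 : ∀ u, Q0 u = sInf {y : ℝ | u ≤ F0 y})
    (hQ1 : ∀ u, Q1 u = sInf {y : ℝ | u ≤ F1 y})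
    (hU : Measurable U) (hUlaw : μ.map U = volume.restrict (Set.Ioo (0:ℝ) 1))
    (hY1 : Measurable Y1) (hY1law : ∀ y, (μ {ω | Y1 ω ≤ y}).toReal = F1 y)
    (b : ℝ) (hb0 : 0 < b) (hb1 : b ≤ 1)
    (hint : IntegrableOn (fun ω => Y1 ω - Q0 (U ω)) {ω | U ω < b} μ)
    (hint' : IntervalIntegrable (fun u => Q1 u - Q0 u) volume 0 b)
    (hpos : 0 < ∫ u in (0:ℝ)..b, (Q1 u - Q0 u)) :
    0 < ∫ ω in {ω | U ω < b}, (Y1 ω - Q0 (U ω)) ∂μ := by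
  have hApre : {ω | U ω < b} = U ⁻¹' Iio b := rfl
  set ν : Measure Ω := μ.restrict {ω | U ω < b} with hν
  haveI : IsFiniteMeasure ν := by
    constructor
    rw [hν, Measure.restrict_apply_univ]
    exact measure_lt_top μ _
  have hIoo : Iio b ∩ Ioo (0:ℝ) 1 = Ioo 0 b := by
    ext x
    constructor
    · rintro ⟨h1, h2, h3⟩; exact ⟨h2, h1⟩
    · rintro ⟨h1, h2⟩; exact ⟨h2, h1, lt_of_lt_of_le h2 hb1⟩
  have hmapν : ν.map U = volume.restrict (Ioo 0 b) := by
    rw [hν, hApre, ← Measure.restrict_map hU measurableSet_Iio, hUlaw,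
      Measure.restrict_restrict measurableSet_Iio, hIoo]
  have hF1nn : ∀ y, 0 ≤ F1 y := fun y => (hY1law y) ▸ ENNReal.toReal_nonneg
  -- measurable version of Q1 on (0,1)
  set ψ : ℝ → ℝ := fun u => if u ∈ Ioo (0:ℝ) 1 then Q1 u else 0 with hψdef
  have hψm : Measurable ψ := by
    apply measurable_of_Ioi
    intro y
    have hset : ψ ⁻¹' Ioi y
        = (Ioo (0:ℝ) 1 ∩ Ioi (F1 y)) ∪ ((Ioo (0:ℝ) 1)ᶜ ∩ {u : ℝ | y < 0}) := by
      ext u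
      by_cases hu : u ∈ Ioo (0:ℝ) 1
      · have hiff : y < Q1 u ↔ F1 y < u := by
          rw [hQ1 u]; exact lt_quantile_iff hF1 hu.1 hu.2 y
        simp only [mem_preimage, mem_Ioi, hψdef, if_pos hu, mem_union, mem_inter_iff,
          mem_compl_iff, hu, not_true_eq_false, false_and, or_false, true_and, mem_setOf_eq]
        exact hiff
      · simp only [mem_preimage, mem_Ioi, hψdef, mem_union, mem_inter_iff,
          mem_compl_iff, hu, not_false_eq_true, true_and, false_and, false_or, mem_setOf_eq,
          if_false]
    rw [hset]
    refine (measurableSet_Ioo.inter measurableSet_Ioi).union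
      (measurableSet_Ioo.compl.inter ?_)
    by_cases h : y < 0 <;> simp [h]
  have hUae : ∀ᵐ ω ∂ν, U ω ∈ Ioo (0:ℝ) 1 := by
    have hempty : (Ioo (0:ℝ) 1)ᶜ ∩ Ioo 0 b = ∅ := by
      refine eq_empty_iff_forall_notMem.2 ?_
      rintro x ⟨hc, hx⟩
      exact hc ⟨hx.1, lt_of_lt_of_le hx.2 hb1⟩
    have h0 : ν (U ⁻¹' (Ioo (0:ℝ) 1)ᶜ) = 0 := by
      rw [← Measure.map_apply hU measurableSet_Ioo.compl, hmapν,
        Measure.restrict_apply measurableSet_Ioo.compl, hempty, measure_empty]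
    rw [ae_iff]
    exact h0
  have hF1eq : ∀ y, μ {ω | Y1 ω ≤ y} = ENNReal.ofReal (F1 y) := fun y => by
    rw [← hY1law y, ENNReal.ofReal_toReal (measure_ne_top μ _)]
  have hνuniv : ν univ = ENNReal.ofReal b := by
    have h1 : (ν.map U) univ = ν univ := by
      rw [Measure.map_apply hU MeasurableSet.univ, preimage_univ]
    rw [← h1, hmapν, Measure.restrict_apply_univ, Real.volume_Ioo, sub_zero]
  -- stochastic dominance
  have hdom : ∀ y : ℝ, ν {ω | y < ψ (U ω)} ≤ ν {ω | y < Y1 ω} := by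
    intro y
    have hL : ν {ω | y < ψ (U ω)} ≤ ENNReal.ofReal (b - F1 y) := by
      have hset : {ω | y < ψ (U ω)} = U ⁻¹' (ψ ⁻¹' Ioi y) := rfl
      rw [hset, ← Measure.map_apply hU (hψm measurableSet_Ioi), hmapν,
        Measure.restrict_apply (hψm measurableSet_Ioi)]
      have hsub : ψ ⁻¹' Ioi y ∩ Ioo 0 b ⊆ Ioo (F1 y) b := by
        rintro u ⟨h1, h2⟩
        have hu01 : u ∈ Ioo (0:ℝ) 1 := ⟨h2.1, lt_of_lt_of_le h2.2 hb1⟩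
        have hlt : y < Q1 u := by
          simpa [hψdef, hu01.1, hu01.2] using h1
        rw [hQ1 u] at hlt
        exact mem_Ioo.2 ⟨(lt_quantile_iff hF1 hu01.1 hu01.2 y).1 hlt, h2.2⟩
      refine le_trans (measure_mono hsub) (le_of_eq ?_)
      rw [Real.volume_Ioo]
    refine hL.trans ?_
    have hcover : ν univ ≤ ν {ω | y < Y1 ω} + ν {ω | Y1 ω ≤ y} := by
      refine le_trans (measure_mono fun ω _ => ?_) (measure_union_le _ _)
      exact (lt_or_ge y (Y1 ω)).imp id id
    have h2 : ν {ω | Y1 ω ≤ y} ≤ ENNReal.ofReal (F1 y) := by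
      rw [← hF1eq y]
      calc ν {ω | Y1 ω ≤ y} = μ ({ω | Y1 ω ≤ y} ∩ {ω | U ω < b}) :=
            Measure.restrict_apply (hY1 measurableSet_Iic)
        _ ≤ μ {ω | Y1 ω ≤ y} := measure_mono inter_subset_left
    rw [ENNReal.ofReal_sub _ (hF1nn y), tsub_le_iff_right]
    calc ENNReal.ofReal b = ν univ := hνuniv.symm
      _ ≤ ν {ω | y < Y1 ω} + ν {ω | Y1 ω ≤ y} := hcover
      _ ≤ ν {ω | y < Y1 ω} + ENNReal.ofReal (F1 y) := add_le_add (le_refl _) h2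
  -- integrability and change of variables
  have hgI : IntegrableOn (fun u => Q1 u - Q0 u) (Ioo 0 b) volume :=
    ((intervalIntegrable_iff_integrableOn_Ioc_of_le hb0.le).1 hint').mono_set
      Ioo_subset_Ioc_self
  have hgm : AEStronglyMeasurable (fun u => Q1 u - Q0 u) (ν.map U) := by
    rw [hmapν]; exact hgI.aestronglyMeasurable
  have hg2I : Integrable (fun ω => Q1 (U ω) - Q0 (U ω)) ν := by
    have h := (integrable_map_measure hgm hU.aemeasurable).1 (by rw [hmapν]; exact hgI)
    exact h
  have hchange : ∫ ω, (Q1 (U ω) - Q0 (U ω)) ∂ν = ∫ u in (0:ℝ)..b, (Q1 u - Q0 u) := by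
    calc ∫ ω, (Q1 (U ω) - Q0 (U ω)) ∂ν
        = ∫ u, (Q1 u - Q0 u) ∂(ν.map U) := (integral_map hU.aemeasurable hgm).symm
      _ = ∫ u in Ioo (0:ℝ) b, (Q1 u - Q0 u) := by rw [hmapν]
      _ = ∫ u in Ioc (0:ℝ) b, (Q1 u - Q0 u) := integral_Ioc_eq_integral_Ioo.symm
      _ = ∫ u in (0:ℝ)..b, (Q1 u - Q0 u) := (intervalIntegral.integral_of_le hb0.le).symm
  have hf1I : Integrable (fun ω => Y1 ω - Q0 (U ω)) ν := hint
  have hf3I : Integrable (fun ω => Y1 ω - Q1 (U ω)) ν := by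
    have h := hf1I.sub hg2I
    exact h.congr (Filter.Eventually.of_forall fun ω => by
      simp only [Pi.sub_apply]; ring)
  have hsplit : ∫ ω, (Y1 ω - Q0 (U ω)) ∂ν
      = ∫ ω, (Y1 ω - Q1 (U ω)) ∂ν + ∫ ω, (Q1 (U ω) - Q0 (U ω)) ∂ν := by
    rw [← integral_add hf3I hg2I]
    exact integral_congr_ae (Filter.Eventually.of_forall fun ω => by ring)
  have haeeq : (fun ω => Y1 ω - Q1 (U ω)) =ᵐ[ν] (fun ω => Y1 ω - ψ (U ω)) :=
    hUae.mono fun ω hω => by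
      simp only [hψdef]
      rw [if_pos hω]
  have hcore : 0 ≤ ∫ ω, (Y1 ω - Q1 (U ω)) ∂ν := by
    rw [integral_congr_ae haeeq]
    exact integral_nonneg_of_stoch_dom ν hY1 (hψm.comp hU) (hf3I.congr haeeq) hdom
  show 0 < ∫ ω, (Y1 ω - Q0 (U ω)) ∂ν
  rw [hsplit, hchange]
  linarith
end
end
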